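/- arXiv:2301.13392 — 13 statements merged into one kernel-verified Lean document; each statement's English description precedes it below -/
import Mathlib

section
/- Let d be a positive integer and t ≥ 1 an integer. Let f : ℝ → ℝ be differentiable with f′(x) > 0 for every x ∈ ℝ, with f(x) → +∞ as x → +∞ and f(x) → −∞ as x → −∞. Let v₁, …, v_t ∈ ℝ^d be vectors all of whose entries lie in {0,1}, and let x₁, …, x_t ∈ {0,1}. Then there exists θ ∈ ℝ^d such that ∑_{i=1}^t (x_i − f(⟨v_i, θ⟩)) · v_i = 0 (the zero vector of ℝ^d), where ⟨·,·⟩ denotes the standard inner product. -/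
open Filter intervalIntegral in
/-- 1-D coercivity bound for `y ↦ ∫₀^y f - b*y` when `f` is continuous,
strictly monotone and surjective. -/
private lemma mle_aux_coercive (f : ℝ → ℝ) (hfc : Continuous f) (hmono : StrictMono f)
    (hsurj : Function.Surjective f) (b : ℝ) :
    ∃ c : ℝ, ∀ y : ℝ, |y| - c ≤ (∫ s in (0:ℝ)..y, f s) - b * y := by
  set A : ℝ → ℝ := fun y => ∫ s in (0:ℝ)..y, f s with hA
  have hA' : ∀ y, HasDerivAt A (f y) y := fun y =>
    (hfc.integral_hasStrictDerivAt 0 y).hasDerivAt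
  have hAc : Continuous A := (Differentiable.continuous fun y => (hA' y).differentiableAt)
  set g : ℝ → ℝ := fun y => A y - b * y with hg
  have hgc : Continuous g := hAc.sub (continuous_const.mul continuous_id)
  obtain ⟨p, hp⟩ := hsurj (b + 1)
  obtain ⟨q, hq⟩ := hsurj (b - 1)
  have hup : ∀ y, p ≤ y → g p + (y - p) ≤ g y := by
    intro y hy
    have h1 : A y - A p = ∫ s in p..y, f s :=
      integral_interval_sub_left (hfc.intervalIntegrable 0 y) (hfc.intervalIntegrable 0 p)
    have h2 : (∫ s in p..y, (b + 1 : ℝ)) ≤ ∫ s in p..y, f s := by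
      apply integral_mono_on hy (intervalIntegrable_const) (hfc.intervalIntegrable p y)
      intro s hs
      rw [← hp]
      exact hmono.monotone hs.1
    rw [integral_const] at h2
    simp only [hg, smul_eq_mul] at *
    nlinarith [h2, h1]
  have hdown : ∀ y, y ≤ q → g q + (q - y) ≤ g y := by
    intro y hy
    have h1 : A q - A y = ∫ s in y..q, f s :=
      integral_interval_sub_left (hfc.intervalIntegrable 0 q) (hfc.intervalIntegrable 0 y)
    have h2 : (∫ s in y..q, f s) ≤ ∫ s in y..q, (b - 1 : ℝ) := by
      apply integral_mono_on hy (hfc.intervalIntegrable y q) (intervalIntegrable_const)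
      intro s hs
      rw [← hq]
      exact hmono.monotone hs.2
    rw [integral_const] at h2
    simp only [hg, smul_eq_mul] at *
    nlinarith [h2, h1]
  set R : ℝ := max |p| |q| with hR
  have hR0 : (0:ℝ) ≤ R := le_trans (abs_nonneg p) (le_max_left _ _)
  obtain ⟨z, hz, hzmin⟩ := (isCompact_Icc (a := -R) (b := R)).exists_isMinOn
    ⟨0, Set.mem_Icc.2 ⟨by linarith, hR0⟩⟩ hgc.continuousOn
  refine ⟨max (R - g z) (max (p - g p) (-q - g q)), fun y => ?_⟩
  rcases lt_or_ge R y with h1 | h1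
  · have hpy : p ≤ y := le_trans (le_trans (le_abs_self p) (le_max_left _ _)) h1.le
    have hy0 : 0 ≤ y := le_trans hR0 h1.le
    have := hup y hpy
    rw [abs_of_nonneg hy0]
    have : y - (p - g p) ≤ g y := by linarith
    calc y - max (R - g z) (max (p - g p) (-q - g q))
        ≤ y - (p - g p) := by
          have := le_trans (le_max_left (p - g p) (-q - g q)) (le_max_right (R - g z) _)
          linarith
      _ ≤ g y := this
  rcases lt_or_ge y (-R) with h2 | h2
  · have hqy : y ≤ q := le_trans h2.le (by
      have : -R ≤ q := by
        have : |q| ≤ R := le_max_right _ _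
        linarith [neg_abs_le q]
      exact this)
    have hy0 : y ≤ 0 := le_trans h2.le (by linarith)
    have := hdown y hqy
    rw [abs_of_nonpos hy0]
    have hle : -y - (-q - g q) ≤ g y := by linarith
    calc -y - max (R - g z) (max (p - g p) (-q - g q))
        ≤ -y - (-q - g q) := by
          have := le_trans (le_max_right (p - g p) (-q - g q)) (le_max_right (R - g z) _)
          linarith
      _ ≤ g y := hle
  · have hmem : y ∈ Set.Icc (-R) R := ⟨h2, h1⟩
    have h3 : g z ≤ g y := hzmin hmem
    have h4 : |y| ≤ R := abs_le.2 ⟨h2, h1⟩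
    have := le_max_left (R - g z) (max (p - g p) (-q - g q))
    have h5 : g y = (∫ s in (0:ℝ)..y, f s) - b * y := rfl
    linarith

/-- Existence of a solution to the maximum-likelihood estimating equation of
BGLM-Estimate: for binary feature vectors `v i` and binary observations `x i`,
and a differentiable, strictly increasing link function `f` with range ℝ,
there exists `θ` with `∑ i, (x i - f ⟨v i, θ⟩) • v i = 0`. -/
theorem mle_equation_has_solution
    (d t : ℕ) (hd : 0 < d) (ht : 1 ≤ t)
    (f : ℝ → ℝ) (hf : Differentiable ℝ f)
    (hf' : ∀ x : ℝ, 0 < deriv f x)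
    (htop : Filter.Tendsto f Filter.atTop Filter.atTop)
    (hbot : Filter.Tendsto f Filter.atBot Filter.atBot)
    (v : Fin t → Fin d → ℝ) (hv : ∀ i j, v i j = 0 ∨ v i j = 1)
    (x : Fin t → ℝ) (hx : ∀ i, x i = 0 ∨ x i = 1) :
    ∃ θ : Fin d → ℝ,
      ∑ i : Fin t, (x i - f (∑ j : Fin d, v i j * θ j)) • v i = 0 := by
  classical
  have hfc : Continuous f := hf.continuous
  have hmono : StrictMono f := strictMono_of_deriv_pos hf'
  have hsurj : Function.Surjective f := hfc.surjective htop hbot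
  set A : ℝ → ℝ := fun y => ∫ s in (0:ℝ)..y, f s with hA
  have hA' : ∀ y, HasDerivAt A (f y) y := fun y =>
    (hfc.integral_hasStrictDerivAt 0 y).hasDerivAt
  have hAc : Continuous A := (Differentiable.continuous fun y => (hA' y).differentiableAt)
  choose c hc using fun i => mle_aux_coercive f hfc hmono hsurj (x i)
  set g : Fin t → ℝ → ℝ := fun i y => A y - x i * y with hgdef
  set H : (Fin t → ℝ) → ℝ := fun u => ∑ i, g i (u i) with hH
  have hHc : Continuous H := by
    apply continuous_finset_sum
    intro i _
    exact (hAc.comp (continuous_apply i)).sub (continuous_const.mul (continuous_apply i))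
  set L : (Fin d → ℝ) →ₗ[ℝ] (Fin t → ℝ) :=
    { toFun := fun θ i => ∑ j, v i j * θ j
      map_add' := by
        intro a b; funext i; simp [mul_add, Finset.sum_add_distrib]
      map_smul' := by
        intro r a; funext i
        simp [Finset.mul_sum, mul_left_comm] } with hL
  set W : Submodule ℝ (Fin t → ℝ) := LinearMap.range L with hW
  -- coercivity
  have key : ∀ u : Fin t → ℝ, ‖u‖ - (∑ i, c i) ≤ H u := by
    intro u
    have h2 : (∑ i, |u i|) - (∑ i, c i) ≤ H u := by
      rw [← Finset.sum_sub_distrib]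
      exact Finset.sum_le_sum fun i _ => hc i (u i)
    have h3 : ‖u‖ ≤ ∑ i, |u i| := by
      refine (pi_norm_le_iff_of_nonneg (Finset.sum_nonneg fun i _ => abs_nonneg _)).2 ?_
      intro i
      simpa [Real.norm_eq_abs] using
        Finset.single_le_sum (f := fun i => |u i|) (fun i _ => abs_nonneg _) (Finset.mem_univ i)
    linarith
  have hev : ∀ᶠ u in Filter.cocompact (Fin t → ℝ) ⊓ Filter.principal (W : Set (Fin t → ℝ)),
      H 0 ≤ H u := by
    have h1 : ∀ᶠ u in Filter.cocompact (Fin t → ℝ), H 0 ≤ H u := by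
      filter_upwards [tendsto_norm_cocompact_atTop.eventually_ge_atTop (H 0 + ∑ i, c i)] with u hu
      have := key u
      linarith
    exact h1.filter_mono inf_le_left
  obtain ⟨u, huW, humin⟩ := hHc.continuousOn.exists_isMinOn'
    W.closed_of_finiteDimensional (W.zero_mem) hev
  obtain ⟨θ₀, hθ₀⟩ := huW
  -- vanishing directional derivatives
  have key2 : ∀ η : Fin d → ℝ, ∑ i, (f (u i) - x i) * (L η i) = 0 := by
    intro η
    set w : Fin t → ℝ := L η with hw
    have hlm : IsLocalMin (fun s : ℝ => H (u + s • w)) 0 := by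
      apply Filter.Eventually.of_forall
      intro s
      have hmem : u + s • w ∈ W := W.add_mem ⟨θ₀, hθ₀⟩ (W.smul_mem s ⟨η, rfl⟩)
      simpa using humin hmem
    have hder : HasDerivAt (fun s : ℝ => H (u + s • w))
        (∑ i, (f (u i) - x i) * w i) 0 := by
      have heq : (fun s : ℝ => H (u + s • w)) =
          fun s => ∑ i, (A (u i + s * w i) - x i * (u i + s * w i)) := by
        funext s; simp [hH, hgdef]
      rw [heq]
      have hterm : ∀ i ∈ Finset.univ, HasDerivAt
          (fun s : ℝ => A (u i + s * w i) - x i * (u i + s * w i))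
          ((f (u i) - x i) * w i) 0 := by
        intro i _
        have hinner : HasDerivAt (fun s : ℝ => u i + s * w i) (w i) 0 := by
          simpa using ((hasDerivAt_id (0:ℝ)).mul_const (w i)).const_add (u i)
        have h1 : HasDerivAt (fun s : ℝ => A (u i + s * w i)) (f (u i) * w i) 0 := by
          have := (hA' (u i + 0 * w i)).comp 0 hinner
          simpa [Function.comp_def] using this
        have h2 : HasDerivAt (fun s : ℝ => x i * (u i + s * w i)) (x i * w i) 0 :=
          hinner.const_mul (x i)
        have := h1.sub h2
        rw [sub_mul]
        exact this
      have := HasDerivAt.fun_sum hterm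
      exact this
    have := hlm.hasDerivAt_eq_zero hder
    simpa [hw] using this
  set T : Fin d → ℝ := fun j => ∑ i, (x i - f (u i)) * v i j with hT
  have hTzero : ∀ η : Fin d → ℝ, ∑ j, T j * η j = 0 := by
    intro η
    have h1 : ∑ j, T j * η j = ∑ i, (x i - f (u i)) * (L η i) := by
      simp only [hT, Finset.sum_mul]
      rw [Finset.sum_comm]
      congr 1
      funext i
      simp only [hL, LinearMap.coe_mk, AddHom.coe_mk, Finset.mul_sum]
      congr 1
      funext j
      ring
    rw [h1]
    have h2 := key2 η
    have : ∑ i, (x i - f (u i)) * (L η i) = -∑ i, (f (u i) - x i) * (L η i) := by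
      rw [← Finset.sum_neg_distrib]
      congr 1
      funext i
      ring
    rw [this, h2, neg_zero]
  have hTeq : ∀ j, T j = 0 := by
    have hsq := hTzero T
    intro j
    have h1 : ∀ k ∈ Finset.univ, (0:ℝ) ≤ T k * T k := fun k _ => mul_self_nonneg _
    have := (Finset.sum_eq_zero_iff_of_nonneg h1).1 hsq j (Finset.mem_univ j)
    exact mul_self_eq_zero.1 this
  refine ⟨θ₀, ?_⟩
  funext j
  have hu : ∀ i, u i = ∑ j, v i j * θ₀ j := by
    intro i
    rw [← hθ₀]
    rfl
  have : (∑ i : Fin t, (x i - f (∑ j : Fin d, v i j * θ₀ j)) • v i) j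
      = ∑ i, (x i - f (u i)) * v i j := by
    rw [Finset.sum_apply]
    congr 1
    funext i
    rw [hu i]
    rfl
  rw [this]
  exact hTeq j
end

section
/- Let f : ℝ → ℝ be twice differentiable with continuous second derivative, and suppose there are constants L₁, L₂ > 0 with 0 < f′(x) ≤ L₁ and f″(x) ≤ L₂ for all x ∈ ℝ. Then for every b ∈ ℝ there exists g : ℝ → ℝ, twice differentiable with continuous second derivative, such that: g(x) = f(x) for all x ≤ b; 0 < g′(x) ≤ L₁ and g″(x) ≤ L₂ for all x ∈ ℝ; and g(x) → +∞ as x → +∞. -/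
open Set Filter Real

lemma glue_hasDerivAt (b : ℝ) (u v u' v' : ℝ → ℝ)
    (hu : ∀ x, HasDerivAt u (u' x) x) (hv : ∀ x, HasDerivAt v (v' x) x)
    (h0 : u b = v b) (h1 : u' b = v' b) (x : ℝ) :
    HasDerivAt (fun y => if y ≤ b then u y else v y)
      (if x ≤ b then u' x else v' x) x := by
  rcases lt_trichotomy x b with hx | hx | hx
  · rw [if_pos hx.le]
    refine (hu x).congr_of_eventuallyEq ?_
    filter_upwards [Iio_mem_nhds hx] with y hy
    exact if_pos (le_of_lt hy)
  · subst hx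
    rw [if_pos le_rfl]
    have hIic : HasDerivWithinAt (fun y => if y ≤ x then u y else v y) (u' x) (Iic x) x :=
      ((hu x).hasDerivWithinAt).congr (fun y hy => if_pos hy) (if_pos le_rfl)
    have hIci : HasDerivWithinAt (fun y => if y ≤ x then u y else v y) (u' x) (Ici x) x := by
      rw [h1]
      refine ((hv x).hasDerivWithinAt).congr (fun y hy => ?_) ?_
      · rcases eq_or_lt_of_le (mem_Ici.mp hy) with h | h
        · simp [← h, h0]
        · exact if_neg (not_le.mpr h)
      · simp [h0]
    have := hIic.union hIci
    rw [Iic_union_Ici] at this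
    exact hasDerivWithinAt_univ.mp this
  · rw [if_neg (not_le.mpr hx)]
    refine (hv x).congr_of_eventuallyEq ?_
    filter_upwards [Ioi_mem_nhds hx] with y hy
    exact if_neg (not_le.mpr hy)

lemma upward_aux
    (f : ℝ → ℝ) (hf : ContDiff ℝ 2 f)
    (L₁ L₂ : ℝ) (hL₁ : 0 < L₁) (hL₂ : 0 < L₂)
    (hder : ∀ x : ℝ, 0 < deriv f x ∧ deriv f x ≤ L₁)
    (hder2 : ∀ x : ℝ, deriv (deriv f) x ≤ L₂)
    (b k A : ℝ) (hk : 0 < k) (hA : 0 < A) (hAL : A ≤ L₁)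
    (hkA : k * (A - deriv f b) = deriv (deriv f) b) :
    ∃ g : ℝ → ℝ, ContDiff ℝ 2 g ∧
      (∀ x ≤ b, g x = f x) ∧
      (∀ x : ℝ, 0 < deriv g x ∧ deriv g x ≤ L₁) ∧
      (∀ x : ℝ, deriv (deriv g) x ≤ L₂) ∧
      Filter.Tendsto g Filter.atTop Filter.atTop := by
  set c := deriv f b with hc
  set d := deriv (deriv f) b with hd
  set B := c - A with hB
  -- the replacement function and its derivatives
  set P : ℝ → ℝ := fun x => f b + A * (x - b) + (B / k) * (1 - Real.exp (-(k * (x - b)))) with hP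
  set P1 : ℝ → ℝ := fun x => A + B * Real.exp (-(k * (x - b))) with hP1
  set P2 : ℝ → ℝ := fun x => d * Real.exp (-(k * (x - b))) with hP2
  have hexp : ∀ x : ℝ, HasDerivAt (fun y => Real.exp (-(k * (y - b))))
      (Real.exp (-(k * (x - b))) * (-k)) x := by
    intro x
    have h1 : HasDerivAt (fun y : ℝ => -(k * (y - b))) (-k) x := by
      exact (by simpa using ((hasDerivAt_id x).sub_const b).const_mul k :
        HasDerivAt (fun y : ℝ => k * (y - b)) k x).neg
    exact h1.exp
  have hPderiv : ∀ x, HasDerivAt P (P1 x) x := by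
    intro x
    have h2 : HasDerivAt (fun y => A * (y - b)) A x := by
      simpa using ((hasDerivAt_id x).sub_const b).const_mul A
    have h3 : HasDerivAt (fun y => (B / k) * (1 - Real.exp (-(k * (y - b)))))
        ((B / k) * (0 - Real.exp (-(k * (x - b))) * (-k))) x :=
      (((hasDerivAt_const x (1:ℝ)).sub (hexp x))).const_mul (B / k)
    have := ((h2.const_add (f b)).add h3)
    refine this.congr_deriv ?_
    field_simp [hP1]
    ring
  have hP1deriv : ∀ x, HasDerivAt P1 (P2 x) x := by
    intro x
    have h3 : HasDerivAt (fun y => B * Real.exp (-(k * (y - b))))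
        (B * (Real.exp (-(k * (x - b))) * (-k))) x := (hexp x).const_mul B
    have := h3.const_add A
    refine this.congr_deriv ?_
    have : d = B * (-k) := by rw [hB]; linarith [hkA]
    rw [hP2, this]; ring
  -- derivatives of f
  have hfd : Differentiable ℝ f := hf.differentiable (by norm_num)
  have hf1 : ContDiff ℝ 1 (deriv f) := by
    have h2 : ContDiff ℝ (1 + 1) f := by norm_num; exact hf
    exact (contDiff_succ_iff_deriv.mp h2).2.2
  have hf1d : Differentiable ℝ (deriv f) := hf1.differentiable (by norm_num)
  have hf2c : Continuous (deriv (deriv f)) := (contDiff_one_iff_deriv.mp hf1).2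
  have hfderiv : ∀ x, HasDerivAt f (deriv f x) x := fun x => (hfd x).hasDerivAt
  have hf1deriv : ∀ x, HasDerivAt (deriv f) (deriv (deriv f) x) x :=
    fun x => (hf1d x).hasDerivAt
  -- matching at b
  have hm0 : f b = P b := by simp [hP, hB]
  have hm1 : deriv f b = P1 b := by simp [hP1, hB, hc]
  have hm2 : deriv (deriv f) b = P2 b := by simp [hP2, hd]
  -- the glued function
  set g : ℝ → ℝ := fun y => if y ≤ b then f y else P y with hg
  set g1 : ℝ → ℝ := fun y => if y ≤ b then deriv f y else P1 y with hg1
  set g2 : ℝ → ℝ := fun y => if y ≤ b then deriv (deriv f) y else P2 y with hg2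
  have hgd : ∀ x, HasDerivAt g (g1 x) x :=
    glue_hasDerivAt b f P (deriv f) P1 hfderiv hPderiv hm0 hm1
  have hg1d : ∀ x, HasDerivAt g1 (g2 x) x :=
    glue_hasDerivAt b (deriv f) P1 (deriv (deriv f)) P2 hf1deriv hP1deriv hm1 hm2
  have hderivg : deriv g = g1 := funext fun x => (hgd x).deriv
  have hderivg1 : deriv g1 = g2 := funext fun x => (hg1d x).deriv
  have hg2cont : Continuous g2 := by
    refine Continuous.if_le hf2c ?_ continuous_id continuous_const ?_
    · simp only [hP2]
      exact continuous_const.mul (Real.continuous_exp.comp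
        ((continuous_const.mul (continuous_id.sub continuous_const)).neg))
    · intro x hx; subst hx; exact hm2
  have hgc2 : ContDiff ℝ 2 g := by
    have key : ContDiff ℝ (1 + 1) g := by
      rw [contDiff_succ_iff_deriv]
      refine ⟨fun x => (hgd x).differentiableAt, by simp, ?_⟩
      rw [hderivg, contDiff_one_iff_deriv]
      exact ⟨fun x => (hg1d x).differentiableAt, by rw [hderivg1]; exact hg2cont⟩
    exact key.of_le (by norm_num)
  refine ⟨g, hgc2, fun x hx => if_pos hx, ?_, ?_, ?_⟩
  · intro x
    rw [hderivg, hg1]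
    by_cases hx : x ≤ b
    · simpa [hx] using hder x
    · simp only [hx, if_false]
      push_neg at hx
      have he1 : Real.exp (-(k * (x - b))) < 1 := by
        rw [Real.exp_lt_one_iff]; nlinarith
      have he0 : 0 < Real.exp (-(k * (x - b))) := Real.exp_pos _
      have hc0 : 0 < c := (hder b).1
      have hcL : c ≤ L₁ := (hder b).2
      simp only [hP1]
      constructor
      · nlinarith
      · nlinarith
  · intro x
    rw [hderivg, hderivg1, hg2]
    by_cases hx : x ≤ b
    · simpa [hx] using hder2 x
    · simp only [hx, if_false, hP2]
      push_neg at hx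
      have he1 : Real.exp (-(k * (x - b))) ≤ 1 := by
        rw [Real.exp_le_one_iff]; nlinarith
      have he0 : 0 < Real.exp (-(k * (x - b))) := Real.exp_pos _
      have hdL : d ≤ L₂ := hder2 b
      rcases le_or_gt d 0 with h | h
      · nlinarith
      · nlinarith
  · -- tendsto atTop
    have hbound : ∀ᶠ x in atTop, f b - |B| / k + A * (x - b) ≤ g x := by
      filter_upwards [eventually_gt_atTop b] with x hx
      rw [hg]
      simp only [not_le.mpr hx, if_false, hP]
      have he1 : 0 ≤ 1 - Real.exp (-(k * (x - b))) := by
        have : Real.exp (-(k * (x - b))) ≤ 1 := by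
          rw [Real.exp_le_one_iff]; nlinarith
        linarith
      have he2 : 1 - Real.exp (-(k * (x - b))) ≤ 1 := by
        have := Real.exp_pos (-(k * (x - b))); linarith
      have hBk : (B / k) * (1 - Real.exp (-(k * (x - b)))) ≥ -(|B| / k) := by
        rcases le_or_gt 0 B with h | h
        · have h1 : 0 ≤ (B / k) * (1 - Real.exp (-(k * (x - b)))) :=
            mul_nonneg (div_nonneg h hk.le) he1
          have : 0 ≤ |B| / k := div_nonneg (abs_nonneg B) hk.le
          linarith
        · have hab : |B| = -B := abs_of_neg h
          rw [hab]
          have h1 : (B / k) * (1 - Real.exp (-(k * (x - b)))) ≥ B / k := by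
            have hBk0 : B / k < 0 := div_neg_of_neg_of_pos h hk
            nlinarith
          have : -(-B / k) = B / k := by ring
          rw [this]; exact h1
      linarith
    refine tendsto_atTop_mono' _ hbound ?_
    have hlin : Tendsto (fun x : ℝ => A * (x - b)) atTop atTop :=
      Tendsto.const_mul_atTop hA (tendsto_atTop_add_const_right _ _ tendsto_id)
    exact tendsto_atTop_add_const_left _ _ hlin


lemma alg_aux (c d : ℝ) (hc : 0 < c) (hd : d ≤ 0) :
    0 < 1 - 2*d/c ∧ 0 < c + d/(1-2*d/c) ∧ (1-2*d/c) * ((c + d/(1-2*d/c)) - c) = d := by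
  have hk : 0 < 1 - 2*d/c := by
    have : 2*d/c ≤ 0 := div_nonpos_of_nonpos_of_nonneg (by linarith) hc.le
    linarith
  refine ⟨hk, ?_, ?_⟩
  · have h1 : -(c/2) ≤ d / (1-2*d/c) := by
      rw [le_div_iff₀ hk]
      have h2 : -(c/2) * (1 - 2*d/c) = -(c/2) + d := by field_simp; ring
      rw [h2]; linarith
    linarith
  · have h3 : (c + d/(1-2*d/c)) - c = d/(1-2*d/c) := by ring
    rw [h3, mul_comm, div_mul_cancel₀ _ hk.ne']

/-- Upward conversion of the BGLM link function (Appendix A.1): any C² function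
with `0 < f' ≤ L₁` and `f'' ≤ L₂` can be modified on `(b, ∞)` so that it tends
to `+∞`, while agreeing with `f` on `(-∞, b]` and preserving the derivative
bounds. -/
theorem link_function_upward_conversion
    (f : ℝ → ℝ) (hf : ContDiff ℝ 2 f)
    (L₁ L₂ : ℝ) (hL₁ : 0 < L₁) (hL₂ : 0 < L₂)
    (hder : ∀ x : ℝ, 0 < deriv f x ∧ deriv f x ≤ L₁)
    (hder2 : ∀ x : ℝ, deriv (deriv f) x ≤ L₂)
    (b : ℝ) :
    ∃ g : ℝ → ℝ, ContDiff ℝ 2 g ∧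
      (∀ x ≤ b, g x = f x) ∧
      (∀ x : ℝ, 0 < deriv g x ∧ deriv g x ≤ L₁) ∧
      (∀ x : ℝ, deriv (deriv g) x ≤ L₂) ∧
      Filter.Tendsto g Filter.atTop Filter.atTop := by
  have hc0 : 0 < deriv f b := (hder b).1
  have hcL : deriv f b ≤ L₁ := (hder b).2
  rcases le_or_gt (deriv (deriv f) b) 0 with hd | hd
  · -- second derivative at b is nonpositive
    obtain ⟨hk, hA, heq⟩ := alg_aux (deriv f b) (deriv (deriv f) b) hc0 hd
    exact upward_aux f hf L₁ L₂ hL₁ hL₂ hder hder2 b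
      (1 - 2 * deriv (deriv f) b / deriv f b)
      (deriv f b + deriv (deriv f) b / (1 - 2 * deriv (deriv f) b / deriv f b))
      hk hA (by
        have : deriv (deriv f) b / (1 - 2 * deriv (deriv f) b / deriv f b) ≤ 0 :=
          div_nonpos_of_nonpos_of_nonneg hd hk.le
        linarith) heq
  · -- second derivative at b is positive; then deriv f b < L₁
    have hlt : deriv f b < L₁ := by
      rcases lt_or_eq_of_le hcL with h | h
      · exact h
      · exfalso
        have hmax : IsLocalMax (deriv f) b :=
          Filter.Eventually.of_forall fun x => by rw [h]; exact (hder x).2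
        have h0 : deriv (deriv f) b = 0 := hmax.deriv_eq_zero
        linarith
    refine upward_aux f hf L₁ L₂ hL₁ hL₂ hder hder2 b
      (deriv (deriv f) b / (L₁ - deriv f b)) L₁
      (div_pos hd (by linarith)) hL₁ le_rfl ?_
    exact div_mul_cancel₀ _ (ne_of_gt (by linarith : (0:ℝ) < L₁ - deriv f b))
end

section
/- Let f : ℝ → ℝ be twice differentiable with continuous second derivative, and suppose there are constants L₁, L₂ > 0 with 0 < f′(x) ≤ L₁ and f″(x) ≤ L₂ for all x ∈ ℝ. Then for all reals a ≤ b there exists h : ℝ → ℝ, twice differentiable with continuous second derivative, such that: h(x) = f(x) for all x ∈ [a, b]; 0 < h′(x) ≤ L₁ and h″(x) ≤ L₂ for all x ∈ ℝ; h(x) → +∞ as x → +∞ and h(x) → −∞ as x → −∞. In particular, the range of h is all of ℝ. -/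
open Filter Set

open Filter Set

lemma glue_hasDerivAt_s2 {c : ℝ} {F G F' G' : ℝ → ℝ}
    (hFG : F c = G c) (hF : ∀ x, HasDerivAt F (F' x) x)
    (hG : ∀ x, HasDerivAt G (G' x) x) (hFG' : F' c = G' c) (x : ℝ) :
    HasDerivAt (fun y => if y ≤ c then F y else G y)
      (if x ≤ c then F' x else G' x) x := by
  rcases lt_trichotomy x c with hx | rfl | hx
  · rw [if_pos hx.le]
    apply (hF x).congr_of_eventuallyEq
    filter_upwards [Iio_mem_nhds hx] with y hy
    rw [if_pos (le_of_lt hy)]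
  · rw [if_pos le_rfl]
    rw [← hasDerivWithinAt_univ, ← Set.Iic_union_Ici (a := x)]
    apply HasDerivWithinAt.union
    · apply ((hF x).hasDerivWithinAt).congr
      · intro y hy; exact if_pos hy
      · rw [if_pos le_rfl]
    · rw [hFG']
      apply ((hG x).hasDerivWithinAt).congr
      · intro y hy
        rcases eq_or_lt_of_le (Set.mem_Ici.mp hy) with heq | hy'
        · rw [← heq, if_pos le_rfl]; exact hFG
        · rw [if_neg (not_le.mpr hy')]
      · rw [if_pos le_rfl]; exact hFG
  · rw [if_neg (not_le.mpr hx)]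
    apply (hG x).congr_of_eventuallyEq
    filter_upwards [Ioi_mem_nhds hx] with y hy
    rw [if_neg (not_le.mpr hy)]

noncomputable def expP (k c d m e : ℝ) : ℝ → ℝ :=
  fun y => k + c * (y - e) + d * (Real.exp (m * (y - e)) - 1)

lemma expP_hasDerivAt (k c d m e x : ℝ) :
    HasDerivAt (expP k c d m e) (expP (c + d * m) 0 (d * m) m e x) x := by
  have h1 : HasDerivAt (fun y : ℝ => m * (y - e)) m x := by
    simpa using ((hasDerivAt_id x).sub_const e).const_mul m
  have h2 : HasDerivAt (fun y : ℝ => Real.exp (m * (y - e)))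
      (Real.exp (m * (x - e)) * m) x := (Real.hasDerivAt_exp _).comp x h1
  have h3 : HasDerivAt (expP k c d m e)
      (c + d * (Real.exp (m * (x - e)) * m)) x := by
    unfold expP
    exact (((hasDerivAt_id x).sub_const e).const_mul c).const_add k |>.add
      (((h2.sub_const 1).const_mul d)) |>.congr_deriv (by ring)
  convert h3 using 1
  unfold expP; ring

lemma expP_continuous (k c d m e : ℝ) : Continuous (expP k c d m e) := by
  unfold expP; continuity

lemma bound_aux {P L₁ A lam s : ℝ} (hP : 0 < P) (hPL : P ≤ L₁)
    (hlam1 : 1 ≤ lam)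
    (hlam2 : 2 * max A 0 / P ≤ lam)
    (hlam3 : max (-A) 0 / (L₁ - P) ≤ lam)
    (hAL : A < 0 → P < L₁)
    (hs0 : 0 ≤ s) (hs1 : s ≤ 1) :
    0 < P + A / lam * (s - 1) ∧ P + A / lam * (s - 1) ≤ L₁ := by
  have hlam0 : (0:ℝ) < lam := lt_of_lt_of_le one_pos hlam1
  rcases le_or_gt A 0 with hA | hA
  · have ht : A / lam ≤ 0 := div_nonpos_of_nonpos_of_nonneg hA hlam0.le
    constructor
    · nlinarith
    · have h1 : A / lam * (s - 1) ≤ A / lam * (-1) :=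
        mul_le_mul_of_nonpos_left (by linarith) ht
      have h2 : -(A / lam) ≤ L₁ - P := by
        rcases eq_or_lt_of_le hA with rfl | hA'
        · simp; linarith
        · have hPL' : P < L₁ := hAL hA'
          have h3 : max (-A) 0 = -A := max_eq_left (by linarith)
          rw [h3, div_le_iff₀ (by linarith : (0:ℝ) < L₁ - P)] at hlam3
          have : -(A / lam) = (-A) / lam := by ring
          rw [this, div_le_iff₀ hlam0]
          nlinarith
      linarith
  · have ht : 0 < A / lam := div_pos hA hlam0
    constructor
    · have h2A : A / lam ≤ P / 2 := by
        have h3 : max A 0 = A := max_eq_left hA.le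
        rw [h3, div_le_iff₀ hP] at hlam2
        rw [div_le_div_iff₀ hlam0 two_pos]
        nlinarith
      have h1 : A / lam * (-1) ≤ A / lam * (s - 1) :=
        mul_le_mul_of_nonneg_left (by linarith) ht.le
      linarith
    · have h1 : A / lam * (s - 1) ≤ 0 :=
        mul_nonpos_of_nonneg_of_nonpos ht.le (by linarith)
      linarith

lemma bound2_aux {A L₂ s : ℝ} (hA : A ≤ L₂) (hL₂ : 0 < L₂)
    (hs0 : 0 ≤ s) (hs1 : s ≤ 1) : A * s ≤ L₂ := by
  nlinarith [mul_le_mul_of_nonneg_right hA hs0]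


set_option maxHeartbeats 2000000 in
/-- Combined conversion of Appendix A: any C² link function with `0 < f' ≤ L₁`
and `f'' ≤ L₂` can be replaced by one agreeing with `f` on `[a, b]`, with the
same derivative bounds, tending to `+∞` at `+∞` and to `-∞` at `-∞`; in
particular its range is all of ℝ. -/
theorem link_function_full_conversion
    (f : ℝ → ℝ) (hf : ContDiff ℝ 2 f)
    (L₁ L₂ : ℝ) (hL₁ : 0 < L₁) (hL₂ : 0 < L₂)
    (hder : ∀ x : ℝ, 0 < deriv f x ∧ deriv f x ≤ L₁)
    (hder2 : ∀ x : ℝ, deriv (deriv f) x ≤ L₂)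
    (a b : ℝ) (hab : a ≤ b) :
    ∃ h : ℝ → ℝ, ContDiff ℝ 2 h ∧
      (∀ x ∈ Set.Icc a b, h x = f x) ∧
      (∀ x : ℝ, 0 < deriv h x ∧ deriv h x ≤ L₁) ∧
      (∀ x : ℝ, deriv (deriv h) x ≤ L₂) ∧
      Filter.Tendsto h Filter.atTop Filter.atTop ∧
      Filter.Tendsto h Filter.atBot Filter.atBot ∧
      Set.range h = Set.univ := by
  -- basic differentiability facts
  rw [show (2 : WithTop ℕ∞) = 1 + 1 from rfl] at hf
  obtain ⟨hdf, -, hf1⟩ := contDiff_succ_iff_deriv.mp hf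
  obtain ⟨hdp, hcp'⟩ := contDiff_one_iff_deriv.mp hf1
  set p : ℝ → ℝ := deriv f with hp_def
  set p' : ℝ → ℝ := deriv p with hp'_def
  have hp : ∀ x, HasDerivAt f (p x) x := fun x => (hdf x).hasDerivAt
  have hp' : ∀ x, HasDerivAt p (p' x) x := fun x => (hdp x).hasDerivAt
  -- at a point where p attains the max L₁ the derivative of p vanishes
  have hmax : ∀ c : ℝ, p c = L₁ → p' c = 0 := by
    intro c hc
    have hlm : IsLocalMax p c := by
      apply IsMaxOn.isLocalMax (s := Set.univ) _ univ_mem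
      intro y _
      simp only [hc]
      exact (hder y).2
    exact hlm.deriv_eq_zero
  have hpa : 0 < p a := (hder a).1
  have hpb : 0 < p b := (hder b).1
  have hpaL : p a ≤ L₁ := (hder a).2
  have hpbL : p b ≤ L₁ := (hder b).2
  have hAL : p' a < 0 → p a < L₁ := by
    intro hA
    rcases lt_or_eq_of_le hpaL with h | h
    · exact h
    · rw [hmax a h] at hA; exact absurd hA (lt_irrefl 0)
  have hBL : 0 < p' b → p b < L₁ := by
    intro hB
    rcases lt_or_eq_of_le hpbL with h | h
    · exact h
    · rw [hmax b h] at hB; exact absurd hB (lt_irrefl 0)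
  -- the two exponential extensions
  set lamL : ℝ := 1 + 2 * max (p' a) 0 / p a + max (-(p' a)) 0 / (L₁ - p a) with hlamL_def
  set lamR : ℝ := 1 + 2 * max (-(p' b)) 0 / p b + max (p' b) 0 / (L₁ - p b) with hlamR_def
  have hlamL1 : 1 ≤ lamL := by
    have t1 : 0 ≤ 2 * max (p' a) 0 / p a := by positivity
    have t2 : 0 ≤ max (-(p' a)) 0 / (L₁ - p a) := by
      apply div_nonneg (le_max_right _ _) (by linarith)
    rw [hlamL_def]; linarith
  have hlamR1 : 1 ≤ lamR := by
    have t1 : 0 ≤ 2 * max (-(p' b)) 0 / p b := by positivity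
    have t2 : 0 ≤ max (p' b) 0 / (L₁ - p b) := by
      apply div_nonneg (le_max_right _ _) (by linarith)
    rw [hlamR_def]; linarith
  have hlamL0 : (0:ℝ) < lamL := lt_of_lt_of_le one_pos hlamL1
  have hlamR0 : (0:ℝ) < lamR := lt_of_lt_of_le one_pos hlamR1
  have htL2 : 0 ≤ max (-(p' a)) 0 / (L₁ - p a) :=
    div_nonneg (le_max_right _ _) (by linarith)
  have htL1 : 0 ≤ 2 * max (p' a) 0 / p a := by positivity
  have htR2 : 0 ≤ max (p' b) 0 / (L₁ - p b) :=
    div_nonneg (le_max_right _ _) (by linarith)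
  have htR1 : 0 ≤ 2 * max (-(p' b)) 0 / p b := by positivity
  have hlamL2 : 2 * max (p' a) 0 / p a ≤ lamL := by rw [hlamL_def]; linarith
  have hlamL3 : max (-(p' a)) 0 / (L₁ - p a) ≤ lamL := by rw [hlamL_def]; linarith
  have hlamR2 : 2 * max (-(p' b)) 0 / p b ≤ lamR := by rw [hlamR_def]; linarith
  have hlamR3 : max (- -(p' b)) 0 / (L₁ - p b) ≤ lamR := by
    rw [neg_neg, hlamR_def]; linarith
  have hBL' : -(p' b) < 0 → p b < L₁ := fun hB => hBL (by linarith)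
  set L : ℝ → ℝ := expP (f a) (p a - p' a / lamL) (p' a / lamL ^ 2) lamL a with hL_def
  set LD : ℝ → ℝ := expP (p a - p' a / lamL + p' a / lamL ^ 2 * lamL) 0
      (p' a / lamL ^ 2 * lamL) lamL a with hLD_def
  set LDD : ℝ → ℝ := expP (0 + p' a / lamL ^ 2 * lamL * lamL) 0
      (p' a / lamL ^ 2 * lamL * lamL) lamL a with hLDD_def
  set R : ℝ → ℝ := expP (f b) (p b + p' b / lamR) (p' b / lamR ^ 2) (-lamR) b with hR_def
  set RD : ℝ → ℝ := expP (p b + p' b / lamR + p' b / lamR ^ 2 * -lamR) 0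
      (p' b / lamR ^ 2 * -lamR) (-lamR) b with hRD_def
  set RDD : ℝ → ℝ := expP (0 + p' b / lamR ^ 2 * -lamR * -lamR) 0
      (p' b / lamR ^ 2 * -lamR * -lamR) (-lamR) b with hRDD_def
  have hLd : ∀ x, HasDerivAt L (LD x) x := fun x => expP_hasDerivAt _ _ _ _ _ x
  have hLDd : ∀ x, HasDerivAt LD (LDD x) x := fun x => by
    have := expP_hasDerivAt (p a - p' a / lamL + p' a / lamL ^ 2 * lamL) 0
      (p' a / lamL ^ 2 * lamL) lamL a x
    simpa [hLD_def, hLDD_def] using this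
  have hRd : ∀ x, HasDerivAt R (RD x) x := fun x => expP_hasDerivAt _ _ _ _ _ x
  have hRDd : ∀ x, HasDerivAt RD (RDD x) x := fun x => by
    have := expP_hasDerivAt (p b + p' b / lamR + p' b / lamR ^ 2 * -lamR) 0
      (p' b / lamR ^ 2 * -lamR) (-lamR) b x
    simpa [hRD_def, hRDD_def] using this
  -- values and derivative formulas
  have hLval : ∀ x, L x = f a + (p a - p' a / lamL) * (x - a)
      + p' a / lamL ^ 2 * (Real.exp (lamL * (x - a)) - 1) := fun x => rfl
  have hLDval : ∀ x, LD x = p a + p' a / lamL * (Real.exp (lamL * (x - a)) - 1) := by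
    intro x
    simp only [hLD_def, expP]
    field_simp [hlamL0.ne']
    ring
  have hLDDval : ∀ x, LDD x = p' a * Real.exp (lamL * (x - a)) := by
    intro x
    simp only [hLDD_def, expP]
    field_simp [hlamL0.ne']
    ring
  have hRval : ∀ x, R x = f b + (p b + p' b / lamR) * (x - b)
      + p' b / lamR ^ 2 * (Real.exp (-lamR * (x - b)) - 1) := fun x => rfl
  have hRDval : ∀ x, RD x = p b + (-(p' b)) / lamR * (Real.exp (-lamR * (x - b)) - 1) := by
    intro x
    simp only [hRD_def, expP]
    field_simp [hlamR0.ne']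
    ring
  have hRDDval : ∀ x, RDD x = p' b * Real.exp (-lamR * (x - b)) := by
    intro x
    simp only [hRDD_def, expP]
    field_simp [hlamR0.ne']
    ring
  have hLa : L a = f a := by rw [hLval]; simp
  have hLDa : LD a = p a := by rw [hLDval]; simp
  have hLDDa : LDD a = p' a := by rw [hLDDval]; simp
  have hRb : R b = f b := by rw [hRval]; simp
  have hRDb : RD b = p b := by rw [hRDval]; simp
  have hRDDb : RDD b = p' b := by rw [hRDDval]; simp
  -- gluing
  set M : ℝ → ℝ := fun y => if y ≤ a then L y else f y with hM_def
  set MD : ℝ → ℝ := fun y => if y ≤ a then LD y else p y with hMD_def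
  set MDD : ℝ → ℝ := fun y => if y ≤ a then LDD y else p' y with hMDD_def
  have hMd : ∀ x, HasDerivAt M (MD x) x := fun x =>
    glue_hasDerivAt_s2 hLa hLd hp hLDa x
  have hMDd : ∀ x, HasDerivAt MD (MDD x) x := fun x =>
    glue_hasDerivAt_s2 hLDa hLDd hp' hLDDa x
  set h : ℝ → ℝ := fun y => if y ≤ b then M y else R y with hh_def
  set q : ℝ → ℝ := fun y => if y ≤ b then MD y else RD y with hq_def
  set r : ℝ → ℝ := fun y => if y ≤ b then MDD y else RDD y with hr_def
  have hMb : M b = R b := by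
    simp only [hM_def]
    rw [hRb]
    by_cases hba : b ≤ a
    · have : a = b := le_antisymm hab hba
      rw [if_pos hba, ← this, hLa, this]
    · rw [if_neg hba]
  have hMDb : MD b = RD b := by
    simp only [hMD_def]
    rw [hRDb]
    by_cases hba : b ≤ a
    · have : a = b := le_antisymm hab hba
      rw [if_pos hba, ← this, hLDa, this]
    · rw [if_neg hba]
  have hMDDb : MDD b = RDD b := by
    simp only [hMDD_def]
    rw [hRDDb]
    by_cases hba : b ≤ a
    · have : a = b := le_antisymm hab hba
      rw [if_pos hba, ← this, hLDDa, this]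
    · rw [if_neg hba]
  have hhd : ∀ x, HasDerivAt h (q x) x := fun x =>
    glue_hasDerivAt_s2 hMb hMd hRd hMDb x
  have hqd : ∀ x, HasDerivAt q (r x) x := fun x =>
    glue_hasDerivAt_s2 hMDb hMDd hRDd hMDDb x
  have hrc : Continuous r := by
    apply Continuous.if_le _ _ continuous_id continuous_const
    · intro x hx
      have hxb : x = b := hx
      subst hxb; exact hMDDb
    · apply Continuous.if_le _ _ continuous_id continuous_const
      · intro x hx
        have hxa : x = a := hx
        subst hxa; exact hLDDa
      · exact expP_continuous _ _ _ _ _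
      · exact hcp'
    · exact expP_continuous _ _ _ _ _
  have hdh : deriv h = q := funext fun x => (hhd x).deriv
  have hdq : deriv q = r := funext fun x => (hqd x).deriv
  -- pointwise bounds on q
  have hqb : ∀ x, 0 < q x ∧ q x ≤ L₁ := by
    intro x
    simp only [hq_def]
    by_cases hxb : x ≤ b
    · rw [if_pos hxb]
      simp only [hMD_def]
      by_cases hxa : x ≤ a
      · rw [if_pos hxa, hLDval]
        have hs0 : (0:ℝ) ≤ Real.exp (lamL * (x - a)) := (Real.exp_pos _).le
        have hs1 : Real.exp (lamL * (x - a)) ≤ 1 :=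
          Real.exp_le_one_iff.mpr (mul_nonpos_of_nonneg_of_nonpos hlamL0.le (by linarith))
        exact bound_aux hpa hpaL hlamL1 hlamL2 hlamL3 hAL hs0 hs1
      · rw [if_neg hxa]; exact hder x
    · rw [if_neg hxb, hRDval]
      have hs0 : (0:ℝ) ≤ Real.exp (-lamR * (x - b)) := (Real.exp_pos _).le
      have hs1 : Real.exp (-lamR * (x - b)) ≤ 1 := by
        apply Real.exp_le_one_iff.mpr
        push_neg at hxb
        nlinarith
      exact bound_aux hpb hpbL hlamR1 hlamR2 hlamR3 hBL' hs0 hs1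
  -- pointwise bounds on r
  have hrb : ∀ x, r x ≤ L₂ := by
    intro x
    simp only [hr_def]
    by_cases hxb : x ≤ b
    · rw [if_pos hxb]
      simp only [hMDD_def]
      by_cases hxa : x ≤ a
      · rw [if_pos hxa, hLDDval]
        exact bound2_aux (hder2 a) hL₂ (Real.exp_pos _).le
          (Real.exp_le_one_iff.mpr (mul_nonpos_of_nonneg_of_nonpos hlamL0.le (by linarith)))
      · rw [if_neg hxa]; exact hder2 x
    · rw [if_neg hxb, hRDDval]
      push_neg at hxb
      exact bound2_aux (hder2 b) hL₂ (Real.exp_pos _).le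
        (Real.exp_le_one_iff.mpr (by nlinarith))
  -- slope positivity at infinity
  have hcL : 0 < p a - p' a / lamL := by
    have := (bound_aux hpa hpaL hlamL1 hlamL2 hlamL3 hAL (le_refl (0:ℝ)) (by norm_num)).1
    linarith [this]
  have hcR : 0 < p b + p' b / lamR := by
    have := (bound_aux hpb hpbL hlamR1 hlamR2 hlamR3 hBL' (le_refl (0:ℝ)) (by norm_num)).1
    have e : p b + -(p' b) / lamR * (0 - 1) = p b + p' b / lamR := by ring
    rw [e] at this
    exact this
  refine ⟨h, ?_, ?_, ?_, ?_, ?_, ?_, ?_⟩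
  · -- ContDiff ℝ 2 h
    rw [show (2 : WithTop ℕ∞) = 1 + 1 from rfl, contDiff_succ_iff_deriv]
    refine ⟨fun x => (hhd x).differentiableAt, by simp, ?_⟩
    rw [hdh, contDiff_one_iff_deriv]
    exact ⟨fun x => (hqd x).differentiableAt, hdq ▸ hrc⟩
  · -- agreement on [a, b]
    intro x hx
    simp only [hh_def]
    rw [if_pos hx.2]
    simp only [hM_def]
    by_cases hxa : x ≤ a
    · have : x = a := le_antisymm hxa hx.1
      rw [if_pos hxa, this, hLa]
    · rw [if_neg hxa]
  · intro x; rw [hdh]; exact hqb x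
  · intro x; rw [hdh, hdq]; exact hrb x
  · -- tendsto atTop
    apply tendsto_atTop_mono' atTop
      (f₁ := fun x => (p b + p' b / lamR) * x +
        (f b - (p b + p' b / lamR) * b - |p' b / lamR ^ 2|))
    · filter_upwards [eventually_gt_atTop b] with x hx
      simp only [hh_def]
      rw [if_neg (not_le.mpr hx), hRval]
      have hs0 : (0:ℝ) < Real.exp (-lamR * (x - b)) := Real.exp_pos _
      have hs1 : Real.exp (-lamR * (x - b)) ≤ 1 :=
        Real.exp_le_one_iff.mpr (by nlinarith)
      have habs : -(|p' b / lamR ^ 2|) ≤ p' b / lamR ^ 2 * (Real.exp (-lamR * (x - b)) - 1) := by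
        have h1 : |p' b / lamR ^ 2 * (Real.exp (-lamR * (x - b)) - 1)| ≤ |p' b / lamR ^ 2| := by
          rw [abs_mul]
          apply mul_le_of_le_one_right (abs_nonneg _)
          rw [abs_le]
          constructor <;> linarith
        linarith [neg_abs_le (p' b / lamR ^ 2 * (Real.exp (-lamR * (x - b)) - 1)), abs_le.mp h1]
      nlinarith
    · exact tendsto_atTop_add_const_right atTop _ (Tendsto.const_mul_atTop hcR tendsto_id)
  · -- tendsto atBot
    apply tendsto_atBot_mono' atBot
      (f₁ := fun x => (p a - p' a / lamL) * x +
        (f a - (p a - p' a / lamL) * a + |p' a / lamL ^ 2|))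
    · filter_upwards [eventually_le_atBot a] with x hx
      simp only [hh_def]
      rw [if_pos (le_trans hx hab)]
      simp only [hM_def]
      rw [if_pos hx, hLval]
      have hs0 : (0:ℝ) < Real.exp (lamL * (x - a)) := Real.exp_pos _
      have hs1 : Real.exp (lamL * (x - a)) ≤ 1 :=
        Real.exp_le_one_iff.mpr (mul_nonpos_of_nonneg_of_nonpos hlamL0.le (by linarith))
      have habs : p' a / lamL ^ 2 * (Real.exp (lamL * (x - a)) - 1) ≤ |p' a / lamL ^ 2| := by
        have h1 : |p' a / lamL ^ 2 * (Real.exp (lamL * (x - a)) - 1)| ≤ |p' a / lamL ^ 2| := by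
          rw [abs_mul]
          apply mul_le_of_le_one_right (abs_nonneg _)
          rw [abs_le]
          constructor <;> linarith
        linarith [le_abs_self (p' a / lamL ^ 2 * (Real.exp (lamL * (x - a)) - 1)), abs_le.mp h1]
      nlinarith
    · exact tendsto_atBot_add_const_right atBot _ (Tendsto.const_mul_atBot hcL tendsto_id)
  · -- range
    have hcont : Continuous h := by
      rw [continuous_iff_continuousAt]
      exact fun x => (hhd x).differentiableAt.continuousAt
    apply Set.range_eq_univ.mpr
    apply hcont.surjective
    · apply tendsto_atTop_mono' atTop
        (f₁ := fun x => (p b + p' b / lamR) * x +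
          (f b - (p b + p' b / lamR) * b - |p' b / lamR ^ 2|))
      · filter_upwards [eventually_gt_atTop b] with x hx
        simp only [hh_def]
        rw [if_neg (not_le.mpr hx), hRval]
        have hs0 : (0:ℝ) < Real.exp (-lamR * (x - b)) := Real.exp_pos _
        have hs1 : Real.exp (-lamR * (x - b)) ≤ 1 :=
          Real.exp_le_one_iff.mpr (by nlinarith)
        have habs : -(|p' b / lamR ^ 2|) ≤ p' b / lamR ^ 2 * (Real.exp (-lamR * (x - b)) - 1) := by
          have h1 : |p' b / lamR ^ 2 * (Real.exp (-lamR * (x - b)) - 1)| ≤ |p' b / lamR ^ 2| := by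
            rw [abs_mul]
            apply mul_le_of_le_one_right (abs_nonneg _)
            rw [abs_le]
            constructor <;> linarith
          linarith [neg_abs_le (p' b / lamR ^ 2 * (Real.exp (-lamR * (x - b)) - 1)), abs_le.mp h1]
        nlinarith
      · exact tendsto_atTop_add_const_right atTop _ (Tendsto.const_mul_atTop hcR tendsto_id)
    · apply tendsto_atBot_mono' atBot
        (f₁ := fun x => (p a - p' a / lamL) * x +
          (f a - (p a - p' a / lamL) * a + |p' a / lamL ^ 2|))
      · filter_upwards [eventually_le_atBot a] with x hx
        simp only [hh_def]
        rw [if_pos (le_trans hx hab)]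
        simp only [hM_def]
        rw [if_pos hx, hLval]
        have hs0 : (0:ℝ) < Real.exp (lamL * (x - a)) := Real.exp_pos _
        have hs1 : Real.exp (lamL * (x - a)) ≤ 1 :=
          Real.exp_le_one_iff.mpr (mul_nonpos_of_nonneg_of_nonpos hlamL0.le (by linarith))
        have habs : p' a / lamL ^ 2 * (Real.exp (lamL * (x - a)) - 1) ≤ |p' a / lamL ^ 2| := by
          have h1 : |p' a / lamL ^ 2 * (Real.exp (lamL * (x - a)) - 1)| ≤ |p' a / lamL ^ 2| := by
            rw [abs_mul]
            apply mul_le_of_le_one_right (abs_nonneg _)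
            rw [abs_le]
            constructor <;> linarith
          linarith [le_abs_self (p' a / lamL ^ 2 * (Real.exp (lamL * (x - a)) - 1)), abs_le.mp h1]
        nlinarith
      · exact tendsto_atBot_add_const_right atBot _ (Tendsto.const_mul_atBot hcL tendsto_id)
end

section
/- Let d and D be integers with 1 ≤ d ≤ D and D ≥ 2, and let ζ ∈ (0, 1/2]. Let μ be a probability measure on {0,1}^d such that: (i) μ-almost surely the first coordinate x₁ equals 1; and (ii) for every coordinate index i ∈ {2, …, d} and every assignment z ∈ {0,1}^{d−1} of the remaining coordinates having positive μ-probability, the conditional probabilities satisfy μ(x_i = 1 ∣ the other coordinates equal z) ≥ ζ and μ(x_i = 0 ∣ the other coordinates equal z) ≥ ζ. Then for every v ∈ ℝ^d with ‖v‖₂ = 1, one has μ({x ∈ {0,1}^d : |∑_{i=1}^d x_i v_i| ≥ 1/√(4D² − 3)}) ≥ ζ. -/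
open MeasureTheory

private lemma all_meas {α : Type*} [MeasurableSpace α] [Finite α]
    [MeasurableSingletonClass α] (s : Set α) : MeasurableSet s :=
  (Set.toFinite s).measurableSet

/-- Anti-concentration lemma for the initialization phase (Appendix C): if a
probability measure on `{0,1}^d` has its first coordinate almost surely `1`
and every other coordinate has conditional probability at least `ζ` of being
`1` and of being `0` given any assignment of the remaining coordinates, then
for every unit vector `v`, with probability at least `ζ` the inner product
with `v` is at least `1/√(4D²-3)` in absolute value. -/
theorem initialization_anticoncentration
    (d D : ℕ) (hd : 1 ≤ d) (hdD : d ≤ D) (hD : 2 ≤ D)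
    (ζ : ℝ) (hζ0 : 0 < ζ) (hζhalf : ζ ≤ 1 / 2)
    (μ : Measure (Fin d → Bool)) [IsProbabilityMeasure μ]
    (hfirst : ∀ᵐ x ∂μ, x ⟨0, hd⟩ = true)
    (hcond : ∀ i : Fin d, i ≠ ⟨0, hd⟩ → ∀ z : Fin d → Bool,
      0 < μ {x | ∀ j ≠ i, x j = z j} →
      ENNReal.ofReal ζ * μ {x | ∀ j ≠ i, x j = z j} ≤
          μ {x | x i = true ∧ ∀ j ≠ i, x j = z j} ∧
      ENNReal.ofReal ζ * μ {x | ∀ j ≠ i, x j = z j} ≤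
          μ {x | x i = false ∧ ∀ j ≠ i, x j = z j})
    (v : Fin d → ℝ) (hv : ∑ i : Fin d, (v i) ^ 2 = 1) :
    ENNReal.ofReal ζ ≤
      μ {x | 1 / Real.sqrt (4 * (D : ℝ) ^ 2 - 3) ≤
        |∑ i : Fin d, (if x i then (1 : ℝ) else 0) * v i|} := by
  classical
  set i0 : Fin d := ⟨0, hd⟩ with hi0
  set c : ℝ := 1 / Real.sqrt (4 * (D : ℝ) ^ 2 - 3) with hc
  set S : (Fin d → Bool) → ℝ := fun x => ∑ i : Fin d, (if x i then (1 : ℝ) else 0) * v i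
    with hS
  set E : Set (Fin d → Bool) := {x | c ≤ |S x|} with hE
  have hDpos : (0:ℝ) < 4 * (D : ℝ) ^ 2 - 3 := by
    have : (2:ℝ) ≤ (D:ℝ) := by exact_mod_cast hD
    nlinarith
  have hsq : (Real.sqrt (4 * (D : ℝ) ^ 2 - 3)) ^ 2 = 4 * (D : ℝ) ^ 2 - 3 :=
    Real.sq_sqrt hDpos.le
  have hspos : 0 < Real.sqrt (4 * (D : ℝ) ^ 2 - 3) := Real.sqrt_pos.mpr hDpos
  have hcpos : 0 < c := by positivity
  have hc2 : c ^ 2 * (4 * (D : ℝ) ^ 2 - 3) = 1 := by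
    rw [hc, div_pow, one_pow, hsq]
    field_simp
  by_cases hbig : ∃ i : Fin d, i ≠ i0 ∧ 2 * c ≤ |v i|
  · -- Case 1: some non-first coordinate has a large weight; use conditioning.
    obtain ⟨i, hi, hvi⟩ := hbig
    set A : (Fin d → Bool) → Set (Fin d → Bool) := fun z => {x | ∀ j ≠ i, x j = z j}
      with hA
    set F : Finset (Fin d → Bool) := Finset.univ.filter (fun z => z i = false) with hF
    -- basic facts about A
    have hmemA : ∀ x z : Fin d → Bool, x ∈ A z ↔ ∀ j ≠ i, x j = z j := fun _ _ => Iff.rfl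
    have hAdisj : (↑F : Set (Fin d → Bool)).PairwiseDisjoint A := by
      intro z₁ hz₁ z₂ hz₂ hne
      simp only [Finset.coe_filter, Set.mem_setOf_eq, Finset.mem_coe, hF,
        Finset.mem_filter] at hz₁ hz₂
      refine Set.disjoint_left.mpr fun x hx1 hx2 => hne ?_
      funext j
      by_cases hj : j = i
      · rw [hj, hz₁.2, hz₂.2]
      · rw [← hx1 j hj, hx2 j hj]
    have hAcover : ⋃ z ∈ F, A z = Set.univ := by
      ext x
      simp only [Set.mem_iUnion, Set.mem_univ, iff_true]
      refine ⟨Function.update x i false, ?_, ?_⟩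
      · simp [hF]
      · intro j hj; simp [Function.update_of_ne hj]
    -- singleton descriptions
    have hsingle : ∀ (z : Fin d → Bool) (b : Bool),
        {x | x i = b ∧ ∀ j ≠ i, x j = z j} = {Function.update z i b} := by
      intro z b
      ext x
      simp only [Set.mem_setOf_eq, Set.mem_singleton_iff]
      constructor
      · rintro ⟨h1, h2⟩
        funext j
        by_cases hj : j = i
        · rw [hj, h1, Function.update_self]
        · rw [h2 j hj, Function.update_of_ne hj]
      · rintro rfl
        refine ⟨Function.update_self _ _ _, fun j hj => Function.update_of_ne hj _ _⟩
    have hupdmem : ∀ (z : Fin d → Bool) (b : Bool), Function.update z i b ∈ A z := by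
      intro z b j hj; exact Function.update_of_ne hj _ _
    -- S of updates differ by v i
    have hSdiff : ∀ z : Fin d → Bool,
        S (Function.update z i true) - S (Function.update z i false) = v i := by
      intro z
      rw [hS]
      simp only
      rw [← Finset.add_sum_erase Finset.univ _ (Finset.mem_univ i),
        ← Finset.add_sum_erase Finset.univ
          (fun j => (if (Function.update z i false) j then (1:ℝ) else 0) * v j)
          (Finset.mem_univ i)]
      have hrest : ∀ j ∈ Finset.univ.erase i,
          (if (Function.update z i true) j then (1:ℝ) else 0) * v j =
          (if (Function.update z i false) j then (1:ℝ) else 0) * v j := by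
        intro j hj
        rw [Function.update_of_ne (Finset.mem_erase.mp hj).1,
          Function.update_of_ne (Finset.mem_erase.mp hj).1]
      rw [Finset.sum_congr rfl hrest]
      simp [Function.update_self]
    -- key per-pair estimate
    have hkey : ∀ z ∈ F, ENNReal.ofReal ζ * μ (A z) ≤ μ (E ∩ A z) := by
      intro z _
      rcases eq_or_lt_of_le (zero_le : 0 ≤ μ (A z)) with h0 | hpos
      · rw [← h0, mul_zero]; exact zero_le
      · have hc2' := hcond i hi z hpos
        rw [hsingle z true, hsingle z false] at hc2'
        have habs : c ≤ |S (Function.update z i true)| ∨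
            c ≤ |S (Function.update z i false)| := by
          by_contra hcon
          push_neg at hcon
          have h2 :
              |S (Function.update z i true) - S (Function.update z i false)| ≤
              |S (Function.update z i true)| + |S (Function.update z i false)| :=
            abs_sub _ _
          rw [hSdiff z] at h2
          linarith [hcon.1, hcon.2]
        rcases habs with h | h
        · refine le_trans hc2'.1 (measure_mono ?_)
          rw [Set.singleton_subset_iff]
          exact ⟨h, hupdmem z true⟩
        · refine le_trans hc2'.2 (measure_mono ?_)
          rw [Set.singleton_subset_iff]
          exact ⟨h, hupdmem z false⟩
    -- sum up
    have hsum1 : ∑ z ∈ F, μ (A z) = 1 := by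
      rw [← measure_biUnion_finset hAdisj (fun z _ => all_meas _), hAcover,
        measure_univ]
    have hdisj2 : (↑F : Set (Fin d → Bool)).PairwiseDisjoint (fun z => E ∩ A z) :=
      fun z₁ h₁ z₂ h₂ hne =>
        (hAdisj h₁ h₂ hne).mono Set.inter_subset_right Set.inter_subset_right
    have hsum2 : ∑ z ∈ F, μ (E ∩ A z) = μ E := by
      rw [← measure_biUnion_finset hdisj2 (fun z _ => all_meas _),
        ← Set.inter_iUnion₂, hAcover, Set.inter_univ]
    calc ENNReal.ofReal ζ = ENNReal.ofReal ζ * ∑ z ∈ F, μ (A z) := by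
          rw [hsum1, mul_one]
      _ = ∑ z ∈ F, ENNReal.ofReal ζ * μ (A z) := Finset.mul_sum _ _ _
      _ ≤ ∑ z ∈ F, μ (E ∩ A z) := Finset.sum_le_sum hkey
      _ = μ E := hsum2
  · -- Case 2: all non-first weights are small, so |S x| ≥ c almost surely.
    push_neg at hbig
    set T : ℝ := ∑ j ∈ Finset.univ.erase i0, |v j| with hT
    have hT0 : 0 ≤ T := Finset.sum_nonneg fun j _ => abs_nonneg _
    have hTle : T ≤ 2 * c * (D - 1 : ℝ) := by
      have h1 : T ≤ (Finset.univ.erase i0).card • (2 * c) :=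
        Finset.sum_le_card_nsmul _ _ _ fun j hj =>
          (hbig j (Finset.mem_erase.mp hj).1).le
      have hcard : (Finset.univ.erase i0).card = d - 1 := by
        rw [Finset.card_erase_of_mem (Finset.mem_univ _), Finset.card_univ,
          Fintype.card_fin]
      rw [hcard, nsmul_eq_mul] at h1
      have hdr : ((d - 1 : ℕ) : ℝ) ≤ (D - 1 : ℝ) := by
        have : ((d - 1 : ℕ) : ℝ) = (d : ℝ) - 1 := by
          have := hd; push_cast [Nat.cast_sub hd]; ring
        rw [this]
        have : (d:ℝ) ≤ (D:ℝ) := by exact_mod_cast hdD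
        linarith
      calc T ≤ ((d-1:ℕ):ℝ) * (2*c) := h1
        _ ≤ (D - 1 : ℝ) * (2*c) := by
            exact mul_le_mul_of_nonneg_right hdr (by linarith)
        _ = 2 * c * (D - 1 : ℝ) := by ring
    have hsumsq : v i0 ^ 2 + ∑ j ∈ Finset.univ.erase i0, v j ^ 2 = 1 := by
      have h := hv
      rw [← Finset.add_sum_erase Finset.univ (fun j => v j ^ 2)
        (Finset.mem_univ i0)] at h
      exact h
    have hsqle : ∑ j ∈ Finset.univ.erase i0, v j ^ 2 ≤ 2 * c * T := by
      rw [hT, Finset.mul_sum]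
      refine Finset.sum_le_sum fun j hj => ?_
      have h1 : |v j| ≤ 2 * c := (hbig j (Finset.mem_erase.mp hj).1).le
      calc v j ^ 2 = |v j| * |v j| := by rw [← abs_mul, abs_mul_self]; ring
        _ ≤ 2 * c * |v j| := mul_le_mul_of_nonneg_right h1 (abs_nonneg _)
    have hv0 : c + T ≤ |v i0| := by
      have h1 : (c + T) ^ 2 ≤ v i0 ^ 2 := by
        have hD2 : (2:ℝ) ≤ (D:ℝ) := by exact_mod_cast hD
        have h2cD : (0:ℝ) ≤ 2*c*((D:ℝ)-1) := by nlinarith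
        nlinarith [mul_le_mul hTle hTle hT0 h2cD, mul_nonneg hcpos.le hT0]
      nlinarith [abs_nonneg (v i0), sq_abs (v i0)]
    -- a.s. bound
    have hae : {x : Fin d → Bool | x i0 = true} ⊆ E := by
      intro x hx
      have hSx : S x = v i0 + ∑ j ∈ Finset.univ.erase i0,
          (if x j then (1:ℝ) else 0) * v j := by
        rw [hS]
        simp only
        rw [← Finset.add_sum_erase Finset.univ _ (Finset.mem_univ i0)]
        have : x i0 = true := hx
        rw [this]
        simp
      have hRbound : |∑ j ∈ Finset.univ.erase i0, (if x j then (1:ℝ) else 0) * v j| ≤ T := by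
        refine le_trans (Finset.abs_sum_le_sum_abs _ _) ?_
        refine Finset.sum_le_sum fun j _ => ?_
        rw [abs_mul]
        rcases Bool.dichotomy (x j) with h | h <;> simp [h]
      have : c ≤ |S x| := by
        rw [hSx]
        have h2 := abs_sub (v i0 + ∑ j ∈ Finset.univ.erase i0,
          (if x j then (1:ℝ) else 0) * v j) (∑ j ∈ Finset.univ.erase i0,
          (if x j then (1:ℝ) else 0) * v j)
        simp only [add_sub_cancel_right] at h2
        linarith
      exact this
    have hone : μ {x : Fin d → Bool | x i0 = true} = 1 := by
      have hcompl : μ {x : Fin d → Bool | x i0 = true}ᶜ = 0 := by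
        have := hfirst
        rw [ae_iff] at this
        convert this using 2
        ext x; simp
      have := measure_add_measure_compl (μ := μ)
        (all_meas {x : Fin d → Bool | x i0 = true})
      rw [hcompl, add_zero, measure_univ] at this
      exact this
    calc ENNReal.ofReal ζ ≤ 1 := ENNReal.ofReal_le_one.mpr (by linarith)
      _ = μ {x : Fin d → Bool | x i0 = true} := hone.symm
      _ ≤ μ E := measure_mono hae
end

section
/- Let d, D be integers with 2 ≤ D and 1 ≤ d ≤ D, and set D₀ = √(D−1) + 1/(2√(D−1)). If v ∈ ℝ^d satisfies ‖v‖₂ = 1 and |v₁| ≥ D₀/√(D₀² + 1), then for every x ∈ {0,1}^d with x₁ = 1 one has |∑_{i=1}^d x_i v_i| ≥ 1/√(4D² − 3). -/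
/-- Deterministic case of the initialization anti-concentration lemma: if the
first coordinate of a unit vector `v ∈ ℝ^d` satisfies `|v₁| ≥ D₀/√(D₀²+1)`
with `D₀ = √(D-1) + 1/(2√(D-1))`, then every binary vector `x` with first
coordinate `1` has `|⟨x, v⟩| ≥ 1/√(4D²-3)`. -/
theorem large_first_coordinate_case
    (d D : ℕ) (hD : 2 ≤ D) (hd : 1 ≤ d) (hdD : d ≤ D)
    (D₀ : ℝ) (hD₀ : D₀ = Real.sqrt ((D : ℝ) - 1) + 1 / (2 * Real.sqrt ((D : ℝ) - 1)))
    (v : Fin d → ℝ) (hv : ∑ i : Fin d, (v i) ^ 2 = 1)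
    (hv1 : D₀ / Real.sqrt (D₀ ^ 2 + 1) ≤ |v ⟨0, hd⟩|)
    (x : Fin d → ℝ) (hx : ∀ i, x i = 0 ∨ x i = 1) (hx1 : x ⟨0, hd⟩ = 1) :
    1 / Real.sqrt (4 * (D : ℝ) ^ 2 - 3) ≤ |∑ i : Fin d, x i * v i| := by
  have hD1 : (1 : ℝ) ≤ (D : ℝ) - 1 := by
    have : (2 : ℝ) ≤ (D : ℝ) := by exact_mod_cast hD
    linarith
  set s : ℝ := Real.sqrt ((D : ℝ) - 1) with hs_def
  have hs2 : s ^ 2 = (D : ℝ) - 1 := Real.sq_sqrt (by linarith)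
  have hs1 : 1 ≤ s := by
    rw [show (1:ℝ) = Real.sqrt 1 by simp [Real.sqrt_one]]
    exact Real.sqrt_le_sqrt hD1
  have hs : 0 < s := by linarith
  have hD₀pos : 0 < D₀ := by
    rw [hD₀]; positivity
  have hD₀2 : D₀ ^ 2 = s ^ 2 + 1 + 1 / (4 * s ^ 2) := by
    rw [hD₀]; field_simp; ring
  set Q : ℝ := Real.sqrt (D₀ ^ 2 + 1) with hQ_def
  have hQ2 : Q ^ 2 = D₀ ^ 2 + 1 := Real.sq_sqrt (by positivity)
  have hQpos : 0 < Q := Real.sqrt_pos.2 (by positivity)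
  set i0 : Fin d := ⟨0, hd⟩ with hi0
  set a : ℝ := v i0 with ha_def
  set T : ℝ := ∑ i ∈ Finset.univ.erase i0, x i * v i with hT_def
  have hsplit : ∑ i : Fin d, x i * v i = a + T := by
    rw [← Finset.add_sum_erase _ _ (Finset.mem_univ i0), hx1, one_mul]
  have hvsplit : ∑ i ∈ Finset.univ.erase i0, (v i) ^ 2 = 1 - a ^ 2 := by
    rw [Finset.sum_erase_eq_sub (Finset.mem_univ i0), hv]
  have hvnn : ∀ i ∈ Finset.univ.erase i0, 0 ≤ (v i) ^ 2 := fun i _ => sq_nonneg _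
  have ha2le : a ^ 2 ≤ 1 := by
    have : 0 ≤ 1 - a ^ 2 := hvsplit ▸ Finset.sum_nonneg hvnn
    linarith
  -- lower bound on a²
  have ha2ge : D₀ ^ 2 / (D₀ ^ 2 + 1) ≤ a ^ 2 := by
    have h1 : (D₀ / Q) ^ 2 ≤ |a| ^ 2 := by
      apply pow_le_pow_left₀ (by positivity) hv1
    rw [sq_abs] at h1
    calc D₀ ^ 2 / (D₀ ^ 2 + 1) = (D₀ / Q) ^ 2 := by
          rw [div_pow, hQ2]
      _ ≤ a ^ 2 := h1
  -- Cauchy-Schwarz bound on T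
  have hx2 : ∑ i ∈ Finset.univ.erase i0, (x i) ^ 2 ≤ (D : ℝ) - 1 := by
    have hcard : (Finset.univ.erase i0).card = d - 1 := by
      rw [Finset.card_erase_of_mem (Finset.mem_univ i0), Finset.card_univ, Fintype.card_fin]
    have h1 : ∑ i ∈ Finset.univ.erase i0, (x i) ^ 2 ≤ (Finset.univ.erase i0).card • (1:ℝ) := by
      apply Finset.sum_le_card_nsmul
      intro i _
      rcases hx i with h | h <;> rw [h] <;> norm_num
    rw [hcard, nsmul_eq_mul, mul_one] at h1
    refine h1.trans ?_
    have : ((d - 1 : ℕ) : ℝ) = (d : ℝ) - 1 := by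
      have : (1:ℕ) ≤ d := hd
      push_cast [Nat.cast_sub this]; ring
    rw [this]
    have : (d : ℝ) ≤ (D : ℝ) := by exact_mod_cast hdD
    linarith
  have hCS : T ^ 2 ≤ ((D : ℝ) - 1) * (1 - a ^ 2) := by
    have h1 := Finset.sum_mul_sq_le_sq_mul_sq (Finset.univ.erase i0) x v
    calc T ^ 2 ≤ (∑ i ∈ Finset.univ.erase i0, (x i) ^ 2) *
          (∑ i ∈ Finset.univ.erase i0, (v i) ^ 2) := by
          simpa [hT_def] using h1
      _ ≤ ((D : ℝ) - 1) * (1 - a ^ 2) := by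
          rw [hvsplit]
          apply mul_le_mul hx2 le_rfl (by linarith) (by linarith)
  have h1ma : 1 - a ^ 2 ≤ 1 / (D₀ ^ 2 + 1) := by
    have hpos : (0:ℝ) < D₀ ^ 2 + 1 := by positivity
    have h1 := (div_le_iff₀ hpos).mp ha2ge
    rw [le_div_iff₀ hpos]
    nlinarith
  have hT2 : T ^ 2 ≤ (s / Q) ^ 2 := by
    rw [div_pow, hQ2, hs2]
    calc T ^ 2 ≤ ((D : ℝ) - 1) * (1 - a ^ 2) := hCS
      _ ≤ ((D : ℝ) - 1) * (1 / (D₀ ^ 2 + 1)) := by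
          apply mul_le_mul_of_nonneg_left h1ma (by linarith)
      _ = ((D : ℝ) - 1) / (D₀ ^ 2 + 1) := by ring
  have hTabs : |T| ≤ s / Q := by
    have hc : 0 ≤ s / Q := by positivity
    nlinarith [abs_nonneg T, sq_abs T]
  have hlow : (D₀ - s) / Q ≤ |a + T| := by
    have h1 : |a| - |T| ≤ |a + T| := by
      have := abs_add_le (a + T) (-T)
      simp at this
      linarith [abs_neg T]
    have h2 : D₀ / Q - s / Q ≤ |a| - |T| := by
      apply sub_le_sub hv1 hTabs
    calc (D₀ - s) / Q = D₀ / Q - s / Q := by ring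
      _ ≤ |a| - |T| := h2
      _ ≤ |a + T| := h1
  -- key identity
  have hkey : Real.sqrt (4 * (D : ℝ) ^ 2 - 3) = 2 * s * Q := by
    have h1 : 4 * (D : ℝ) ^ 2 - 3 = (2 * s * Q) ^ 2 := by
      have : (2 * s * Q) ^ 2 = 4 * s ^ 2 * Q ^ 2 := by ring
      rw [this, hQ2, hD₀2]
      have h4 : 4 * s ^ 2 * (1 / (4 * s ^ 2)) = 1 := by
        field_simp
      linear_combination (-1 : ℝ) * h4 + (-4) * (s ^ 2 + (D : ℝ) + 1) * hs2
    rw [h1, Real.sqrt_sq (by positivity)]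
  rw [hsplit, hkey]
  refine le_trans (le_of_eq ?_) hlow
  have hDs : D₀ - s = 1 / (2 * s) := by rw [hD₀]; ring
  rw [hDs, div_div]
end

section
/- Let d, D be integers with 2 ≤ d ≤ D, and set D₀ = √(D−1) + 1/(2√(D−1)). If v ∈ ℝ^d satisfies ‖v‖₂ = 1 and |v₁| < D₀/√(D₀² + 1), then max_{2 ≤ i ≤ d} |v_i| ≥ 2/√(4D² − 3). -/
/-- Second deterministic step of the initialization anti-concentration lemma:
if the first coordinate of a unit vector `v ∈ ℝ^d` satisfies
`|v₁| < D₀/√(D₀²+1)` with `D₀ = √(D-1) + 1/(2√(D-1))`, then some other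
coordinate satisfies `|v_i| ≥ 2/√(4D²-3)`. -/
theorem small_first_coordinate_case
    (d D : ℕ) (hD : 2 ≤ D) (hd : 2 ≤ d) (hdD : d ≤ D)
    (D₀ : ℝ) (hD₀ : D₀ = Real.sqrt ((D : ℝ) - 1) + 1 / (2 * Real.sqrt ((D : ℝ) - 1)))
    (v : Fin d → ℝ) (hv : ∑ i : Fin d, (v i) ^ 2 = 1)
    (hv1 : |v ⟨0, by omega⟩| < D₀ / Real.sqrt (D₀ ^ 2 + 1)) :
    ∃ i : Fin d, i ≠ ⟨0, by omega⟩ ∧ 2 / Real.sqrt (4 * (D : ℝ) ^ 2 - 3) ≤ |v i| := by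
  have hDR : (2:ℝ) ≤ (D:ℝ) := by exact_mod_cast hD
  have hD1 : (0:ℝ) < (D:ℝ) - 1 := by linarith
  set r := Real.sqrt ((D : ℝ) - 1) with hrdef
  have hrpos : 0 < r := Real.sqrt_pos.mpr hD1
  have hr2 : r ^ 2 = (D:ℝ) - 1 := Real.sq_sqrt hD1.le
  have hD₀sq : D₀ ^ 2 = r ^ 2 + 1 + 1 / (4 * r ^ 2) := by
    rw [hD₀]; field_simp; ring
  have hkey : ((D:ℝ) - 1) * (D₀ ^ 2 + 1) = (D:ℝ) ^ 2 - 3/4 := by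
    rw [hD₀sq, hr2]; field_simp; ring
  have hX : (0:ℝ) < 4 * (D:ℝ) ^ 2 - 3 := by nlinarith
  have hsq1 : (0:ℝ) < D₀ ^ 2 + 1 := by positivity
  set i0 : Fin d := ⟨0, by omega⟩ with hi0
  have hv0 : (v i0) ^ 2 < D₀ ^ 2 / (D₀ ^ 2 + 1) := by
    have h3 : (D₀ / Real.sqrt (D₀ ^ 2 + 1)) ^ 2 = D₀ ^ 2 / (D₀ ^ 2 + 1) := by
      rw [div_pow, Real.sq_sqrt hsq1.le]
    have h2 : (v i0) ^ 2 = |v i0| ^ 2 := (sq_abs _).symm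
    rw [h2, ← h3]
    have h0 : (0:ℝ) ≤ |v i0| := abs_nonneg _
    nlinarith [hv1]
  have hsum : (v i0) ^ 2 + ∑ i ∈ Finset.univ.erase i0, (v i) ^ 2 = 1 := by
    have h := Finset.sum_erase_add Finset.univ (fun i => v i ^ 2) (Finset.mem_univ i0)
    rw [hv] at h; linarith
  have hS : 1 / (D₀ ^ 2 + 1) < ∑ i ∈ Finset.univ.erase i0, (v i) ^ 2 := by
    have heq : 1 - D₀ ^ 2 / (D₀ ^ 2 + 1) = 1 / (D₀ ^ 2 + 1) := by field_simp; ring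
    linarith
  have hcard : (Finset.univ.erase i0).card = d - 1 := by
    rw [Finset.card_erase_of_mem (Finset.mem_univ _), Finset.card_univ, Fintype.card_fin]
  have hDc : ((D:ℝ) - 1) * (4 / (4 * (D:ℝ) ^ 2 - 3)) = 1 / (D₀ ^ 2 + 1) := by
    rw [← mul_div_assoc, div_eq_div_iff (ne_of_gt hX) (ne_of_gt hsq1)]
    nlinarith [hkey]
  have hbound : ∑ _i ∈ Finset.univ.erase i0, (4 / (4 * (D:ℝ) ^ 2 - 3))
      ≤ ∑ i ∈ Finset.univ.erase i0, (v i) ^ 2 := by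
    rw [Finset.sum_const, hcard, nsmul_eq_mul]
    have hcast : ((d - 1 : ℕ) : ℝ) = (d:ℝ) - 1 := by
      rw [Nat.cast_sub (by omega)]; norm_num
    have hdd : (d:ℝ) ≤ (D:ℝ) := by exact_mod_cast hdD
    have hcpos : (0:ℝ) ≤ 4 / (4 * (D:ℝ) ^ 2 - 3) := by positivity
    rw [hcast]
    calc ((d:ℝ) - 1) * (4 / (4 * (D:ℝ) ^ 2 - 3))
        ≤ ((D:ℝ) - 1) * (4 / (4 * (D:ℝ) ^ 2 - 3)) := by
          apply mul_le_mul_of_nonneg_right (by linarith) hcpos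
      _ = 1 / (D₀ ^ 2 + 1) := hDc
      _ ≤ ∑ i ∈ Finset.univ.erase i0, (v i) ^ 2 := hS.le
  have hne : (Finset.univ.erase i0).Nonempty := by
    refine ⟨⟨1, by omega⟩, Finset.mem_erase.mpr ⟨?_, Finset.mem_univ _⟩⟩
    simp [hi0, Fin.ext_iff]
  obtain ⟨i, hi, hle⟩ := Finset.exists_le_of_sum_le hne hbound
  refine ⟨i, Finset.ne_of_mem_erase hi, ?_⟩
  have h4 : (2 / Real.sqrt (4 * (D:ℝ) ^ 2 - 3)) ^ 2 = 4 / (4 * (D:ℝ) ^ 2 - 3) := by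
    rw [div_pow, Real.sq_sqrt hX.le]; norm_num
  have hsq : (2 / Real.sqrt (4 * (D:ℝ) ^ 2 - 3)) ^ 2 ≤ |v i| ^ 2 := by
    rw [h4, sq_abs]; exact hle
  calc 2 / Real.sqrt (4 * (D:ℝ) ^ 2 - 3)
      = Real.sqrt ((2 / Real.sqrt (4 * (D:ℝ) ^ 2 - 3)) ^ 2) := by
        rw [Real.sqrt_sq (by positivity)]
    _ ≤ Real.sqrt (|v i| ^ 2) := Real.sqrt_le_sqrt hsq
    _ = |v i| := Real.sqrt_sq (abs_nonneg _)
end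

section
/- Let p, n, T be positive integers with p ≤ n. Let W₁, …, W_T ∈ ℝ^p satisfy ‖W_t‖₂² ≤ p for every t. Define real p×p matrices by M₀ = I_p (the identity) and M_t = M_{t−1} + W_t W_tᵀ for 1 ≤ t ≤ T. Then every M_t is symmetric positive definite (in particular invertible), and ∑_{t=1}^T W_tᵀ M_{t−1}^{−1} W_t ≤ (n·p / log(n+1)) · log(1 + T). -/
open Matrix

lemma aux_log_chord {n x : ℝ} (hn : 1 ≤ n) (h0 : 0 ≤ x) (hx : x ≤ n) :
    x * Real.log (n + 1) ≤ n * Real.log (1 + x) := by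
  have hn0 : (0:ℝ) < n := by linarith
  have ha : (0:ℝ) ≤ 1 - x / n := by rw [sub_nonneg, div_le_one hn0]; exact hx
  have hb : (0:ℝ) ≤ x / n := by positivity
  have hab : (1 - x / n) + x / n = 1 := by ring
  have key := strictConcaveOn_log_Ioi.concaveOn.2 (Set.mem_Ioi.mpr one_pos)
    (Set.mem_Ioi.mpr (by linarith : (0:ℝ) < 1 + n)) ha hb hab
  have hpt : (1 - x / n) • (1:ℝ) + (x / n) • (1 + n) = 1 + x := by
    simp only [smul_eq_mul]
    field_simp
    ring
  rw [hpt] at key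
  simp only [smul_eq_mul, Real.log_one, mul_zero, zero_add] at key
  have := mul_le_mul_of_nonneg_left key hn0.le
  have hxn : n * (x / n) = x := by field_simp
  calc x * Real.log (n + 1) = n * (x / n) * Real.log (1 + n) := by rw [hxn, add_comm 1 n]
    _ = n * (x / n * Real.log (1 + n)) := by ring
    _ ≤ n * Real.log (1 + x) := this

lemma aux_dot_vecMulVec {q : ℕ} (w v : Fin q → ℝ) :
    v ⬝ᵥ ((vecMulVec w w) *ᵥ v) = (w ⬝ᵥ v) ^ 2 := by
  simp only [dotProduct, mulVec, vecMulVec_apply, pow_two, Finset.sum_mul_sum]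
  refine Finset.sum_congr rfl fun i _ => ?_
  rw [Finset.mul_sum]
  exact Finset.sum_congr rfl fun j _ => by ring

lemma aux_trace_eq_sum_eigenvalues {m : Type*} [Fintype m] [DecidableEq m]
    {A : Matrix m m ℝ} (hA : A.IsHermitian) : A.trace = ∑ i, hA.eigenvalues i := by
  simpa using hA.trace_eq_sum_eigenvalues

/-- Elliptical potential bound from the regret analysis of BLM-LR-Unknown-SG:
with `M₀ = I` and `M_t = M_{t-1} + W_t W_tᵀ` for vectors with `‖W_t‖² ≤ p`,
every `M_t` is (symmetric) positive definite and
`∑_{t=1}^T W_tᵀ M_{t-1}⁻¹ W_t ≤ (n·p/log(n+1))·log(1+T)`. -/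
theorem elliptical_potential_bound
    (p n T : ℕ) (hp : 0 < p) (hpn : p ≤ n) (hT : 0 < T)
    (W : ℕ → Fin p → ℝ)
    (hW : ∀ t, 1 ≤ t → t ≤ T → ∑ i : Fin p, (W t i) ^ 2 ≤ (p : ℝ))
    (M : ℕ → Matrix (Fin p) (Fin p) ℝ)
    (hM0 : M 0 = 1)
    (hMrec : ∀ t, 1 ≤ t → t ≤ T → M t = M (t - 1) + Matrix.vecMulVec (W t) (W t)) :
    (∀ t ≤ T, (M t).PosDef) ∧
    ∑ t ∈ Finset.Icc 1 T, W t ⬝ᵥ ((M (t - 1))⁻¹ *ᵥ W t) ≤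
      ((n : ℝ) * p / Real.log ((n : ℝ) + 1)) * Real.log (1 + (T : ℝ)) := by
  -- positive definiteness
  have hpsd : ∀ t, (Matrix.vecMulVec (W t) (W t)).PosSemidef := by
    intro t
    have : Matrix.vecMulVec (W t) (W t) = Matrix.replicateCol Unit (W t) * (Matrix.replicateCol Unit (W t))ᴴ := by
      rw [Matrix.conjTranspose_replicateCol, Matrix.vecMulVec_eq Unit]
      simp
    rw [this]
    exact Matrix.posSemidef_self_mul_conjTranspose _
  have hpos : ∀ t ≤ T, (M t).PosDef := by
    intro t
    induction t with
    | zero => intro _; rw [hM0]; exact Matrix.PosDef.one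
    | succ k ih =>
      intro h
      rw [hMrec (k+1) (by omega) h, Nat.add_sub_cancel]
      exact (ih (by omega)).add_posSemidef (hpsd (k+1))
  refine ⟨hpos, ?_⟩
  -- lower bound M ≥ I
  have hlb : ∀ t ≤ T, ∀ v : Fin p → ℝ, v ⬝ᵥ v ≤ v ⬝ᵥ (M t *ᵥ v) := by
    intro t
    induction t with
    | zero => intro _ v; rw [hM0, Matrix.one_mulVec]
    | succ k ih =>
      intro h v
      rw [hMrec (k+1) (by omega) h, Nat.add_sub_cancel, Matrix.add_mulVec, dotProduct_add,
        aux_dot_vecMulVec]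
      have := ih (by omega) v
      nlinarith [sq_nonneg (W (k+1) ⬝ᵥ v)]
  -- determinant recursion
  have hdetrec : ∀ t, 1 ≤ t → t ≤ T →
      (M t).det = (M (t-1)).det * (1 + W t ⬝ᵥ ((M (t-1))⁻¹ *ᵥ W t)) := by
    intro t h1 h2
    have hA : (M (t-1)).PosDef := hpos (t-1) (by omega)
    have hAdet : IsUnit (M (t-1)).det := hA.det_pos.ne'.isUnit
    rw [hMrec t h1 h2, Matrix.vecMulVec_eq Unit,
      Matrix.det_add_replicateCol_mul_replicateRow hAdet]
    congr 1
    rw [Matrix.det_unique, Matrix.add_apply, Matrix.one_apply_eq, ← Matrix.replicateRow_vecMul, Matrix.replicateRow_mul_replicateCol_apply,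
      ← Matrix.dotProduct_mulVec]
  -- nonnegativity and upper bound for s t
  have hs_nonneg : ∀ t, 1 ≤ t → t ≤ T → 0 ≤ W t ⬝ᵥ ((M (t-1))⁻¹ *ᵥ W t) := by
    intro t h1 h2
    have hA : (M (t-1)).PosDef := hpos (t-1) (by omega)
    have := hA.inv.posSemidef.dotProduct_mulVec_nonneg (W t)
    simpa using this
  have hs_le : ∀ t, 1 ≤ t → t ≤ T → W t ⬝ᵥ ((M (t-1))⁻¹ *ᵥ W t) ≤ (n:ℝ) := by
    intro t h1 h2
    have hA : (M (t-1)).PosDef := hpos (t-1) (by omega)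
    set w := W t with hw
    set v := (M (t-1))⁻¹ *ᵥ w with hv
    have hAv : M (t-1) *ᵥ v = w := by
      rw [hv, Matrix.mulVec_mulVec, Matrix.mul_nonsing_inv _ hA.det_pos.ne'.isUnit,
        Matrix.one_mulVec]
    have h1' : v ⬝ᵥ v ≤ v ⬝ᵥ w := by
      have := hlb (t-1) (by omega) v
      rwa [hAv] at this
    have hcs : (v ⬝ᵥ w)^2 ≤ (v ⬝ᵥ v) * (w ⬝ᵥ w) := by
      have := Finset.sum_mul_sq_le_sq_mul_sq Finset.univ v w
      simpa [dotProduct, pow_two] using this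
    have hvv : (0:ℝ) ≤ v ⬝ᵥ v := by
      simp only [dotProduct]
      exact Finset.sum_nonneg fun i _ => mul_self_nonneg _
    have hw2 : w ⬝ᵥ w ≤ (n:ℝ) := by
      have := hW t h1 h2
      have hpn' : (p:ℝ) ≤ (n:ℝ) := by exact_mod_cast hpn
      calc w ⬝ᵥ w = ∑ i : Fin p, (w i)^2 := by simp [dotProduct, pow_two]
        _ ≤ (p:ℝ) := this
        _ ≤ (n:ℝ) := hpn'
    have hcomm : w ⬝ᵥ v = v ⬝ᵥ w := dotProduct_comm _ _
    rw [hcomm]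
    nlinarith [hcs, h1', hvv, hw2]
  -- determinant as product
  have hdetprod : ∀ t ≤ T, (M t).det = ∏ u ∈ Finset.Icc 1 t, (1 + W u ⬝ᵥ ((M (u-1))⁻¹ *ᵥ W u)) := by
    intro t
    induction t with
    | zero => intro _; rw [hM0]; simp
    | succ k ih =>
      intro h
      rw [hdetrec (k+1) (by omega) h, Nat.add_sub_cancel, ih (by omega),
        Finset.prod_Icc_succ_top (by omega : 1 ≤ k + 1), Nat.add_sub_cancel]
  -- trace bound
  have htr : ∀ t ≤ T, (M t).trace ≤ (p:ℝ) * (1 + t) := by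
    intro t
    induction t with
    | zero => intro _; rw [hM0]; simp [Matrix.trace_one]
    | succ k ih =>
      intro h
      rw [hMrec (k+1) (by omega) h, Nat.add_sub_cancel, Matrix.trace_add]
      have h2 : (Matrix.vecMulVec (W (k+1)) (W (k+1))).trace ≤ (p:ℝ) := by
        have := hW (k+1) (by omega) h
        calc (Matrix.vecMulVec (W (k+1)) (W (k+1))).trace
            = ∑ i : Fin p, (W (k+1) i)^2 := by
              simp [Matrix.trace, Matrix.diag, Matrix.vecMulVec_apply, pow_two]
          _ ≤ (p:ℝ) := this
      have := ih (by omega)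
      push_cast
      push_cast at this
      linarith
  -- AM-GM: det (M T) ≤ (1+T)^p
  have hp' : (0:ℝ) < p := by exact_mod_cast hp
  have hn1 : (1:ℝ) ≤ n := by
    have h : 1 ≤ n := hp.trans_le hpn
    exact_mod_cast h
  have hH := (hpos T le_rfl).isHermitian
  have hnn : ∀ i, 0 ≤ hH.eigenvalues i := fun i =>
    (hpos T le_rfl).posSemidef.eigenvalues_nonneg i
  have hdetT : (M T).det = ∏ i, hH.eigenvalues i := by
    simpa using hH.det_eq_prod_eigenvalues
  have hprodnn : (0:ℝ) ≤ ∏ i, hH.eigenvalues i :=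
    Finset.prod_nonneg fun i _ => hnn i
  have htrT : ∑ i, hH.eigenvalues i ≤ (p:ℝ) * (1 + T) := by
    rw [← aux_trace_eq_sum_eigenvalues hH]
    exact htr T le_rfl
  have amgm : ∏ i, hH.eigenvalues i ≤ (1 + (T:ℝ)) ^ (p:ℝ) := by
    have h1 := Real.geom_mean_le_arith_mean_weighted Finset.univ (fun _ => (p:ℝ)⁻¹)
      hH.eigenvalues (fun _ _ => by positivity)
      (by rw [Finset.sum_const, Finset.card_univ, Fintype.card_fin, nsmul_eq_mul]; field_simp)
      (fun i _ => hnn i)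
    have h2 : (∏ i, hH.eigenvalues i) ^ ((p:ℝ)⁻¹) ≤ 1 + (T:ℝ) := by
      rw [← Real.finset_prod_rpow _ _ (fun i _ => hnn i)]
      refine h1.trans ?_
      rw [← Finset.mul_sum]
      calc (p:ℝ)⁻¹ * ∑ i, hH.eigenvalues i ≤ (p:ℝ)⁻¹ * ((p:ℝ) * (1 + T)) := by
            exact mul_le_mul_of_nonneg_left htrT (by positivity)
        _ = 1 + (T:ℝ) := by field_simp
    have h3 := Real.rpow_le_rpow (Real.rpow_nonneg hprodnn _) h2 (by positivity : (0:ℝ) ≤ (p:ℝ))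
    rwa [← Real.rpow_mul hprodnn, inv_mul_cancel₀ hp'.ne', Real.rpow_one] at h3
  -- log bound
  have hfacpos : ∀ t ∈ Finset.Icc 1 T, (0:ℝ) < 1 + W t ⬝ᵥ ((M (t-1))⁻¹ *ᵥ W t) := by
    intro t ht
    rw [Finset.mem_Icc] at ht
    have := hs_nonneg t ht.1 ht.2
    linarith
  have hT1 : (0:ℝ) < 1 + (T:ℝ) := by positivity
  have hlog : ∑ t ∈ Finset.Icc 1 T, Real.log (1 + W t ⬝ᵥ ((M (t-1))⁻¹ *ᵥ W t))
      ≤ (p:ℝ) * Real.log (1 + (T:ℝ)) := by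
    rw [← Real.log_prod (fun t ht => (hfacpos t ht).ne'), ← hdetprod T le_rfl,
      ← Real.log_rpow hT1]
    exact Real.log_le_log (hpos T le_rfl).det_pos (hdetT ▸ amgm)
  -- final chain
  have hL : (0:ℝ) < Real.log ((n:ℝ) + 1) := Real.log_pos (by linarith)
  calc ∑ t ∈ Finset.Icc 1 T, W t ⬝ᵥ ((M (t - 1))⁻¹ *ᵥ W t)
      ≤ ∑ t ∈ Finset.Icc 1 T,
          ((n:ℝ) / Real.log ((n:ℝ) + 1)) * Real.log (1 + W t ⬝ᵥ ((M (t - 1))⁻¹ *ᵥ W t)) := by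
        refine Finset.sum_le_sum fun t ht => ?_
        rw [Finset.mem_Icc] at ht
        rw [div_mul_eq_mul_div, le_div_iff₀ hL]
        exact aux_log_chord hn1 (hs_nonneg t ht.1 ht.2) (hs_le t ht.1 ht.2)
    _ = ((n:ℝ) / Real.log ((n:ℝ) + 1)) *
          ∑ t ∈ Finset.Icc 1 T, Real.log (1 + W t ⬝ᵥ ((M (t - 1))⁻¹ *ᵥ W t)) := by
        rw [Finset.mul_sum]
    _ ≤ ((n:ℝ) / Real.log ((n:ℝ) + 1)) * ((p:ℝ) * Real.log (1 + (T:ℝ))) := by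
        exact mul_le_mul_of_nonneg_left hlog (by positivity)
    _ = ((n : ℝ) * p / Real.log ((n : ℝ) + 1)) * Real.log (1 + (T : ℝ)) := by ring
end

section
/- Let p, T be positive integers and let W₁, …, W_T ∈ ℝ^p. Define real p×p matrices by M₀ = I_p (the identity) and M_t = M_{t−1} + W_t W_tᵀ for 1 ≤ t ≤ T. Then every M_t is symmetric positive definite, and ∑_{t=1}^T log(1 + W_tᵀ M_{t−1}^{−1} W_t) = log (det M_T). -/
open Matrix

theorem aux_det_step (p : ℕ) (M : Matrix (Fin p) (Fin p) ℝ) (hM : M.PosDef) (v : Fin p → ℝ) :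
    (M + vecMulVec v v).det = M.det * (1 + v ⬝ᵥ M⁻¹ *ᵥ v) := by
  rw [vecMulVec_eq Unit, det_add_replicateCol_mul_replicateRow (isUnit_iff_ne_zero.2 hM.det_pos.ne')]
  congr 1
  rw [det_unique]
  simp only [Matrix.add_apply, Matrix.one_apply_eq, mul_apply, dotProduct, mulVec, replicateCol_apply,
    replicateRow_apply, Finset.univ_unique, Finset.sum_const, Finset.card_singleton, one_smul,
    Finset.sum_mul, Finset.mul_sum]
  congr 1
  rw [Finset.sum_comm]
  apply Finset.sum_congr rfl; intros x _; apply Finset.sum_congr rfl; intros y _; ring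

theorem aux_posdef_step (p : ℕ) (M : Matrix (Fin p) (Fin p) ℝ) (hM : M.PosDef) (v : Fin p → ℝ) :
    (M + vecMulVec v v).PosDef := by
  apply hM.add_posSemidef
  rw [vecMulVec_eq Unit]
  simpa using posSemidef_conjTranspose_mul_self (replicateRow Unit v)

theorem aux_quad_nonneg (p : ℕ) (M : Matrix (Fin p) (Fin p) ℝ) (hM : M.PosDef) (v : Fin p → ℝ) :
    0 ≤ v ⬝ᵥ M⁻¹ *ᵥ v := by
  simpa using hM.inv.posSemidef.dotProduct_mulVec_nonneg v

/-- Telescoping determinant identity of the elliptical potential argument: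
with `M₀ = I` and `M_t = M_{t-1} + W_t W_tᵀ`, every `M_t` is (symmetric)
positive definite and `∑_{t=1}^T log(1 + W_tᵀ M_{t-1}⁻¹ W_t) = log det M_T`. -/
theorem telescoping_determinant_identity
    (p T : ℕ) (hp : 0 < p) (hT : 0 < T)
    (W : ℕ → Fin p → ℝ)
    (M : ℕ → Matrix (Fin p) (Fin p) ℝ)
    (hM0 : M 0 = 1)
    (hMrec : ∀ t, 1 ≤ t → t ≤ T → M t = M (t - 1) + Matrix.vecMulVec (W t) (W t)) :
    (∀ t ≤ T, (M t).PosDef) ∧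
    ∑ t ∈ Finset.Icc 1 T, Real.log (1 + W t ⬝ᵥ ((M (t - 1))⁻¹ *ᵥ W t)) =
      Real.log (M T).det := by
  have key : ∀ t ≤ T, (M t).PosDef ∧
      ∑ s ∈ Finset.Icc 1 t, Real.log (1 + W s ⬝ᵥ ((M (s - 1))⁻¹ *ᵥ W s)) =
        Real.log (M t).det := by
    intro t ht
    induction t with
    | zero => simp [hM0, Matrix.PosDef.one]
    | succ n ih =>
      obtain ⟨hpd, hsum⟩ := ih (Nat.le_of_succ_le ht)
      have hrec := hMrec (n + 1) (Nat.succ_le_succ (Nat.zero_le n)) ht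
      simp only [Nat.add_sub_cancel] at hrec
      have hpd' : (M (n + 1)).PosDef := hrec ▸ aux_posdef_step p (M n) hpd (W (n + 1))
      refine ⟨hpd', ?_⟩
      have hq : (0:ℝ) ≤ W (n + 1) ⬝ᵥ (M n)⁻¹ *ᵥ W (n + 1) :=
        aux_quad_nonneg p (M n) hpd (W (n + 1))
      rw [Finset.sum_Icc_succ_top (Nat.succ_le_succ (Nat.zero_le n)), hsum,
        Nat.add_sub_cancel, hrec, aux_det_step p (M n) hpd (W (n + 1)),
        Real.log_mul hpd.det_pos.ne' (by linarith : (0:ℝ) < 1 + W (n + 1) ⬝ᵥ (M n)⁻¹ *ᵥ W (n + 1)).ne']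
  exact ⟨fun t ht => (key t ht).1, (key T le_rfl).2⟩
end

section
/- Let A be a finite set with at least two elements, and let μ, μ̂, β : A → ℝ with β(a) ≥ 0 and |μ̂(a) − μ(a)| ≤ β(a) for every a ∈ A. Let ε > 0. Fix a* ∈ A with μ(a*) = max_{a∈A} μ(a), and define the gaps Δ(a*) = μ(a*) − max_{a ≠ a*} μ(a) and Δ(a) = μ(a*) − μ(a) for a ≠ a*. Let a_h be a maximizer of μ̂ over A and let a_l be a maximizer of a ↦ μ̂(a) + β(a) over A ∖ {a_h}. If β(a_h) ≤ max{Δ(a_h), ε/2}/4 and β(a_l) ≤ max{Δ(a_l), ε/2}/4, then μ̂(a_l) + β(a_l) ≤ μ̂(a_h) − β(a_h) + ε. -/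
/-- LUCB stopping lemma (Lemma 6 of Xiong–Chen) used in the analysis of
Causal-PE-unknown: if the confidence radii of the two arms selected by the
LUCB rule are at most a quarter of `max{Δ_a, ε/2}`, then the stopping
condition holds. -/
theorem lucb_stopping_lemma
    {α : Type*} [DecidableEq α] (A : Finset α) (hA : 2 ≤ A.card)
    (μ μh β : α → ℝ)
    (hβ : ∀ a ∈ A, 0 ≤ β a)
    (hconf : ∀ a ∈ A, |μh a - μ a| ≤ β a)
    (ε : ℝ) (hε : 0 < ε)
    (astar : α) (hastar : astar ∈ A)
    (hopt : ∀ a ∈ A, μ a ≤ μ astar)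
    (Δ : α → ℝ)
    (hΔstar : Δ astar = μ astar -
      (A.erase astar).sup'
        (Finset.card_pos.mp (by rw [Finset.card_erase_of_mem hastar]; omega)) μ)
    (hΔ : ∀ a ∈ A, a ≠ astar → Δ a = μ astar - μ a)
    (ah : α) (hah : ah ∈ A) (hahmax : ∀ a ∈ A, μh a ≤ μh ah)
    (al : α) (hal : al ∈ A.erase ah)
    (halmax : ∀ a ∈ A.erase ah, μh a + β a ≤ μh al + β al)
    (hbh : β ah ≤ max (Δ ah) (ε / 2) / 4)
    (hbl : β al ≤ max (Δ al) (ε / 2) / 4) :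
    μh al + β al ≤ μh ah - β ah + ε := by
  have halA : al ∈ A := (Finset.mem_erase.mp hal).2
  have halne : al ≠ ah := (Finset.mem_erase.mp hal).1
  have hch := abs_le.mp (hconf ah hah)
  have hcl := abs_le.mp (hconf al halA)
  have hbh0 := hβ ah hah
  have hbl0 := hβ al halA
  have hhl : μh al ≤ μh ah := hahmax al halA
  by_cases h1 : ah = astar
  · subst h1
    have hΔl : Δ al = μ ah - μ al := hΔ al halA halne
    have hΔle : Δ ah ≤ Δ al := by
      rw [hΔstar, hΔl]
      have : μ al ≤ (A.erase ah).sup'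
          (Finset.card_pos.mp (by rw [Finset.card_erase_of_mem hah]; omega)) μ :=
        Finset.le_sup' μ hal
      linarith
    rcases le_total (Δ al) (ε / 2) with h | h
    · rw [max_eq_right h] at hbl
      rw [max_eq_right (hΔle.trans h)] at hbh
      linarith
    · rw [max_eq_left h] at hbl
      have e2 : max (Δ ah) (ε / 2) ≤ Δ al := max_le hΔle h
      have : β ah ≤ Δ al / 4 := hbh.trans (by linarith)
      linarith [hcl.1, hcl.2, hch.1, hch.2]
  · have hΔh : Δ ah = μ astar - μ ah := hΔ ah hah h1
    by_cases h2 : al = astar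
    · subst h2
      have hΔle : Δ al ≤ Δ ah := by
        rw [hΔstar, hΔh]
        have : μ ah ≤ (A.erase al).sup'
            (Finset.card_pos.mp (by rw [Finset.card_erase_of_mem halA]; omega)) μ :=
          Finset.le_sup' μ (Finset.mem_erase.mpr ⟨h1, hah⟩)
        linarith
      have key : Δ ah ≤ β al + β ah := by
        rw [hΔh]; linarith [hcl.1, hch.1]
      have hh2 : Δ ah ≤ ε / 2 := by
        by_contra h
        push_neg at h
        rw [max_eq_left h.le] at hbh
        have : max (Δ al) (ε / 2) ≤ Δ ah := max_le hΔle h.le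
        have : β al ≤ Δ ah / 4 := hbl.trans (by linarith)
        linarith
      rw [max_eq_right hh2] at hbh
      rw [max_eq_right (hΔle.trans hh2)] at hbl
      linarith
    · have hsA : astar ∈ A.erase ah :=
        Finset.mem_erase.mpr ⟨fun h => h1 h.symm, hastar⟩
      have hcs := abs_le.mp (hconf astar hastar)
      have hstar_le : μ astar ≤ μh al + β al := by
        have := halmax astar hsA
        have := hβ astar hastar
        linarith [hcs.1]
      have hΔl : Δ al = μ astar - μ al := hΔ al halA h2
      have kl : Δ al ≤ 2 * β al := by rw [hΔl]; linarith [hcl.2]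
      have hl2 : Δ al ≤ ε / 2 := by
        by_contra h
        push_neg at h
        rw [max_eq_left h.le] at hbl
        linarith
      have hblε : β al ≤ ε / 8 := by rw [max_eq_right hl2] at hbl; linarith
      have kh : Δ ah ≤ β al + β ah := by
        rw [hΔh]; linarith [hch.1]
      have hh2 : Δ ah ≤ ε / 2 := by
        by_contra h
        push_neg at h
        rw [max_eq_left h.le] at hbh
        linarith
      rw [max_eq_right hh2] at hbh
      linarith
end

section
/- Let A be a finite set with at least two elements, and let μ, μ̂, β : A → ℝ with |μ̂(a) − μ(a)| ≤ β(a) for every a ∈ A. Let ε ≥ 0, let a_h be a maximizer of μ̂ over A, and let a_l be a maximizer of a ↦ μ̂(a) + β(a) over A ∖ {a_h}. If μ̂(a_l) + β(a_l) ≤ μ̂(a_h) − β(a_h) + ε, then μ(a_h) ≥ max_{a∈A} μ(a) − ε; that is, a_h is an ε-optimal arm. -/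
/-- Correctness of the LUCB output in Causal-PE-unknown: when the stopping
condition triggers, the empirically best arm `a_h` is ε-optimal. -/
theorem lucb_output_eps_optimal
    {α : Type*} [DecidableEq α] (A : Finset α) (hA : 2 ≤ A.card)
    (μ μh β : α → ℝ)
    (hconf : ∀ a ∈ A, |μh a - μ a| ≤ β a)
    (ε : ℝ) (hε : 0 ≤ ε)
    (ah : α) (hah : ah ∈ A) (hahmax : ∀ a ∈ A, μh a ≤ μh ah)
    (al : α) (hal : al ∈ A.erase ah)
    (halmax : ∀ a ∈ A.erase ah, μh a + β a ≤ μh al + β al)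
    (hstop : μh al + β al ≤ μh ah - β ah + ε) :
    ∀ a ∈ A, μ a - ε ≤ μ ah := by
  intro a ha
  have hh := abs_sub_le_iff.mp (hconf ah hah)
  by_cases hcase : a = ah
  · subst hcase; linarith
  · have ha' : a ∈ A.erase ah := Finset.mem_erase.mpr ⟨hcase, ha⟩
    have hca := abs_sub_le_iff.mp (hconf a ha)
    have := halmax a ha'
    linarith
end

section
/- Fix an integer n ≥ 1, a weight matrix θ, a set S ⊆ {0,…,n−1} of intervened nodes, a set K ⊆ {0,…,n−1}² of kept edges, and a real r ≥ 0 such that θ(j,i) ≤ r whenever (j,i) ∉ K. Define the weight matrix θ″ by θ″(j,i) = θ(j,i) if (j,i) ∈ K and θ″(j,i) = 0 otherwise. Then for every node i ∈ {0,…,n−1}, |μ[θ,S](i) − μ[θ″,S](i)| ≤ (i+1)·n·r; in particular this difference is at most n²·r. -/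
/-- Claim 1 in the proof of Lemma 7: deleting the low-weight edges (those
outside the kept set `K`, each of weight at most `r`) from a noiseless BLM
changes each interventional mean by at most `(i+1)·n·r ≤ n²·r`.

Here `m` (resp. `m''`) is the interventional mean vector of the model with
weight matrix `θ` (resp. `θ''`), characterized by the strong recursion
`m i = 1` if `i = 0` or `i ∈ S`, and `m i = ∑_{j<i} θ j i · m j` otherwise. -/
theorem blm_delete_small_edges_close
    (n : ℕ) (hn : 1 ≤ n)
    (θ : ℕ → ℕ → ℝ)
    (hθ0 : ∀ j i, 0 ≤ θ j i)
    (hθtri : ∀ j i, ¬ j < i → θ j i = 0)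
    (hθsum : ∀ i, ∑ j ∈ Finset.range n, θ j i ≤ 1)
    (S : Finset ℕ) (hS : ∀ s ∈ S, s < n)
    (K : Finset (ℕ × ℕ)) (hK : ∀ e ∈ K, e.1 < n ∧ e.2 < n)
    (r : ℝ) (hr : 0 ≤ r)
    (hsmall : ∀ j i, j < n → i < n → (j, i) ∉ K → θ j i ≤ r)
    (θ'' : ℕ → ℕ → ℝ)
    (hθ'' : ∀ j i, θ'' j i = if (j, i) ∈ K then θ j i else 0)
    (m m'' : ℕ → ℝ)
    (hm : ∀ i, m i = if i = 0 ∨ i ∈ S then 1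
      else ∑ j ∈ Finset.range i, θ j i * m j)
    (hm'' : ∀ i, m'' i = if i = 0 ∨ i ∈ S then 1
      else ∑ j ∈ Finset.range i, θ'' j i * m'' j) :
    ∀ i < n, |m i - m'' i| ≤ ((i : ℝ) + 1) * n * r ∧
      |m i - m'' i| ≤ (n : ℝ) ^ 2 * r := by
  have hθ''0 : ∀ j i, 0 ≤ θ'' j i := by
    intro j i; rw [hθ'']; split
    · exact hθ0 j i
    · exact le_rfl
  have hθ''le : ∀ j i, θ'' j i ≤ θ j i := by
    intro j i; rw [hθ'']; split
    · exact le_rfl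
    · exact hθ0 j i
  -- generic bounds lemma
  have bounds : ∀ (ψ : ℕ → ℕ → ℝ) (f : ℕ → ℝ),
      (∀ j i, 0 ≤ ψ j i) → (∀ i, ∑ j ∈ Finset.range n, ψ j i ≤ 1) →
      (∀ i, f i = if i = 0 ∨ i ∈ S then 1
        else ∑ j ∈ Finset.range i, ψ j i * f j) →
      ∀ i < n, 0 ≤ f i ∧ f i ≤ 1 := by
    intro ψ f hψ0 hψsum hf i
    induction i using Nat.strong_induction_on with
    | _ i ih =>
    intro hi
    rw [hf i]
    split
    · norm_num
    · constructor
      · apply Finset.sum_nonneg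
        intro j hj
        have hj' := Finset.mem_range.mp hj
        exact mul_nonneg (hψ0 j i) ((ih j hj' (hj'.trans hi)).1)
      · calc ∑ j ∈ Finset.range i, ψ j i * f j
            ≤ ∑ j ∈ Finset.range i, ψ j i := by
              apply Finset.sum_le_sum
              intro j hj
              have hj' := Finset.mem_range.mp hj
              have := (ih j hj' (hj'.trans hi)).2
              nlinarith [(ih j hj' (hj'.trans hi)).1, hψ0 j i]
          _ ≤ ∑ j ∈ Finset.range n, ψ j i := by
              apply Finset.sum_le_sum_of_subset_of_nonneg
              · exact Finset.range_subset_range.mpr hi.le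
              · intro j _ _; exact hψ0 j i
          _ ≤ 1 := hψsum i
  have hθ''sum : ∀ i, ∑ j ∈ Finset.range n, θ'' j i ≤ 1 := by
    intro i
    calc ∑ j ∈ Finset.range n, θ'' j i ≤ ∑ j ∈ Finset.range n, θ j i :=
          Finset.sum_le_sum (fun j _ => hθ''le j i)
      _ ≤ 1 := hθsum i
  have hmb := bounds θ m hθ0 hθsum hm
  have hm''b := bounds θ'' m'' hθ''0 hθ''sum hm''
  -- main induction
  have main : ∀ i < n, |m i - m'' i| ≤ ((i : ℝ) + 1) * n * r := by
    intro i
    induction i using Nat.strong_induction_on with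
    | _ i ih =>
    intro hi
    rw [hm i, hm'' i]
    split
    · simp [mul_nonneg, hr]
      positivity
    · have key : (∑ j ∈ Finset.range i, θ j i * m j)
          - (∑ j ∈ Finset.range i, θ'' j i * m'' j)
          = (∑ j ∈ Finset.range i, (θ j i - θ'' j i) * m j)
          + (∑ j ∈ Finset.range i, θ'' j i * (m j - m'' j)) := by
        rw [← Finset.sum_add_distrib, ← Finset.sum_sub_distrib]
        congr 1; ext j; ring
      rw [key]
      have h1 : |∑ j ∈ Finset.range i, (θ j i - θ'' j i) * m j| ≤ (n : ℝ) * r := by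
        have hterm : ∀ j ∈ Finset.range i, |(θ j i - θ'' j i) * m j| ≤ r := by
          intro j hj
          have hj' := Finset.mem_range.mp hj
          have hjn := hj'.trans hi
          have hm0 := (hmb j hjn).1
          have hm1 := (hmb j hjn).2
          rw [abs_mul, abs_of_nonneg (by linarith [hθ''le j i]),
            abs_of_nonneg hm0]
          have hd : θ j i - θ'' j i ≤ r := by
            rw [hθ'']; split
            · simpa using hr
            · simpa using hsmall j i hjn hi (by assumption)
          nlinarith [hθ''le j i]
        calc |∑ j ∈ Finset.range i, (θ j i - θ'' j i) * m j|
            ≤ ∑ j ∈ Finset.range i, |(θ j i - θ'' j i) * m j| :=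
              Finset.abs_sum_le_sum_abs _ _
          _ ≤ ∑ _j ∈ Finset.range i, r := Finset.sum_le_sum hterm
          _ = (i : ℝ) * r := by simp [mul_comm]
          _ ≤ (n : ℝ) * r := by
              apply mul_le_mul_of_nonneg_right _ hr
              exact_mod_cast hi.le
      have h2 : |∑ j ∈ Finset.range i, θ'' j i * (m j - m'' j)|
          ≤ (i : ℝ) * n * r := by
        have hterm : ∀ j ∈ Finset.range i, |θ'' j i * (m j - m'' j)|
            ≤ θ'' j i * ((i : ℝ) * n * r) := by
          intro j hj
          have hj' := Finset.mem_range.mp hj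
          have hjn := hj'.trans hi
          rw [abs_mul, abs_of_nonneg (hθ''0 j i)]
          apply mul_le_mul_of_nonneg_left _ (hθ''0 j i)
          have := ih j hj' hjn
          have hji : ((j : ℝ) + 1) ≤ (i : ℝ) := by exact_mod_cast hj'
          have hnr : 0 ≤ (n : ℝ) * r := by positivity
          calc |m j - m'' j| ≤ ((j : ℝ) + 1) * n * r := this
            _ ≤ (i : ℝ) * n * r := by nlinarith
        calc |∑ j ∈ Finset.range i, θ'' j i * (m j - m'' j)|
            ≤ ∑ j ∈ Finset.range i, |θ'' j i * (m j - m'' j)| :=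
              Finset.abs_sum_le_sum_abs _ _
          _ ≤ ∑ j ∈ Finset.range i, θ'' j i * ((i : ℝ) * n * r) :=
              Finset.sum_le_sum hterm
          _ = (∑ j ∈ Finset.range i, θ'' j i) * ((i : ℝ) * n * r) := by
              rw [← Finset.sum_mul]
          _ ≤ 1 * ((i : ℝ) * n * r) := by
              apply mul_le_mul_of_nonneg_right _ (by positivity)
              calc ∑ j ∈ Finset.range i, θ'' j i
                  ≤ ∑ j ∈ Finset.range n, θ'' j i := by
                    apply Finset.sum_le_sum_of_subset_of_nonneg
                    · exact Finset.range_subset_range.mpr hi.le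
                    · intro j _ _; exact hθ''0 j i
                _ ≤ 1 := hθ''sum i
          _ = (i : ℝ) * n * r := one_mul _
      calc |_ + _| ≤ _ + _ := abs_add_le _ _
        _ ≤ (n : ℝ) * r + (i : ℝ) * n * r := add_le_add h1 h2
        _ = ((i : ℝ) + 1) * n * r := by ring
  intro i hi
  refine ⟨main i hi, (main i hi).trans ?_⟩
  have : ((i : ℝ) + 1) ≤ (n : ℝ) := by exact_mod_cast hi
  have hn0 : (0 : ℝ) ≤ n := by positivity
  nlinarith [mul_nonneg hn0 hr, mul_le_mul_of_nonneg_right this (mul_nonneg hn0 hr)]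
end

section
/- Fix an integer n ≥ 1, a set S ⊆ {0,…,n−1} of intervened nodes, a real r ≥ 0, and two weight matrices θ′ and θ″ satisfying |θ′(j,i) − θ″(j,i)| ≤ n·r for all j, i. Then for every node i ∈ {0,…,n−1}, |μ[θ′,S](i) − μ[θ″,S](i)| ≤ (i+1)·n²·r; in particular this difference is at most n³·r. -/
/-- Helper: interventional means lie in `[0,1]` for nodes below `n`. -/
lemma blm_mean_mem_unit (n : ℕ) (S : Finset ℕ) (θ : ℕ → ℕ → ℝ)
    (h0 : ∀ j i, 0 ≤ θ j i)
    (hsum : ∀ i, ∑ j ∈ Finset.range n, θ j i ≤ 1)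
    (m : ℕ → ℝ)
    (hm : ∀ i, m i = if i = 0 ∨ i ∈ S then 1
      else ∑ j ∈ Finset.range i, θ j i * m j) :
    ∀ i < n, 0 ≤ m i ∧ m i ≤ 1 := by
  intro i
  induction i using Nat.strong_induction_on with
  | _ i ih =>
    intro hi
    rw [hm i]
    split
    · exact ⟨zero_le_one, le_refl 1⟩
    · constructor
      · refine Finset.sum_nonneg fun j hj => ?_
        have hj' := Finset.mem_range.mp hj
        exact mul_nonneg (h0 j i) (ih j hj' (hj'.trans hi)).1
      · calc ∑ j ∈ Finset.range i, θ j i * m j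
            ≤ ∑ j ∈ Finset.range i, θ j i := by
              refine Finset.sum_le_sum fun j hj => ?_
              have hj' := Finset.mem_range.mp hj
              have := (ih j hj' (hj'.trans hi)).2
              nlinarith [h0 j i, (ih j hj' (hj'.trans hi)).1]
          _ ≤ ∑ j ∈ Finset.range n, θ j i :=
              Finset.sum_le_sum_of_subset_of_nonneg
                (Finset.range_subset_range.mpr hi.le) (fun j _ _ => h0 j i)
          _ ≤ 1 := hsum i

/-- Claim 2 in the proof of Lemma 7: if two weight matrices of a noiseless BLM
(on the same graph nodes, in topological order) differ entrywise by at most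
`n·r`, then their interventional means differ by at most `(i+1)·n²·r ≤ n³·r`.

Here `m'` (resp. `m''`) is the interventional mean vector of the model with
weight matrix `θ'` (resp. `θ''`), characterized by the strong recursion
`m i = 1` if `i = 0` or `i ∈ S`, and `m i = ∑_{j<i} θ j i · m j` otherwise. -/
theorem blm_close_weights_close_means
    (n : ℕ) (hn : 1 ≤ n)
    (S : Finset ℕ) (hS : ∀ s ∈ S, s < n)
    (r : ℝ) (hr : 0 ≤ r)
    (θ' θ'' : ℕ → ℕ → ℝ)
    (hθ'0 : ∀ j i, 0 ≤ θ' j i)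
    (hθ'tri : ∀ j i, ¬ j < i → θ' j i = 0)
    (hθ'sum : ∀ i, ∑ j ∈ Finset.range n, θ' j i ≤ 1)
    (hθ''0 : ∀ j i, 0 ≤ θ'' j i)
    (hθ''tri : ∀ j i, ¬ j < i → θ'' j i = 0)
    (hθ''sum : ∀ i, ∑ j ∈ Finset.range n, θ'' j i ≤ 1)
    (hclose : ∀ j i, |θ' j i - θ'' j i| ≤ (n : ℝ) * r)
    (m' m'' : ℕ → ℝ)
    (hm' : ∀ i, m' i = if i = 0 ∨ i ∈ S then 1
      else ∑ j ∈ Finset.range i, θ' j i * m' j)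
    (hm'' : ∀ i, m'' i = if i = 0 ∨ i ∈ S then 1
      else ∑ j ∈ Finset.range i, θ'' j i * m'' j) :
    ∀ i < n, |m' i - m'' i| ≤ ((i : ℝ) + 1) * (n : ℝ) ^ 2 * r ∧
      |m' i - m'' i| ≤ (n : ℝ) ^ 3 * r := by
  have hb' := blm_mean_mem_unit n S θ' hθ'0 hθ'sum m' hm'
  have hb'' := blm_mean_mem_unit n S θ'' hθ''0 hθ''sum m'' hm''
  have hn' : (1 : ℝ) ≤ (n : ℝ) := by exact_mod_cast hn
  have key : ∀ i, i < n → |m' i - m'' i| ≤ ((i : ℝ) + 1) * (n : ℝ) ^ 2 * r := by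
    intro i
    induction i using Nat.strong_induction_on with
    | _ i ih =>
      intro hi
      rw [hm' i, hm'' i]
      split
      · simp only [sub_self, abs_zero]
        positivity
      · have hterm : ∀ j ∈ Finset.range i,
            |θ' j i * m' j - θ'' j i * m'' j|
              ≤ (n : ℝ) * r + θ'' j i * ((i : ℝ) * (n : ℝ) ^ 2 * r) := by
          intro j hj
          have hj' := Finset.mem_range.mp hj
          have hjn : j < n := hj'.trans hi
          have h1 : |m' j| ≤ 1 := abs_le.mpr ⟨by linarith [(hb' j hjn).1], (hb' j hjn).2⟩
          have h2 : |m' j - m'' j| ≤ ((j : ℝ) + 1) * (n : ℝ) ^ 2 * r := ih j hj' hjn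
          have hji : (j : ℝ) + 1 ≤ (i : ℝ) := by exact_mod_cast hj'
          have h3 : |m' j - m'' j| ≤ (i : ℝ) * (n : ℝ) ^ 2 * r := by
            refine h2.trans ?_
            have : (0:ℝ) ≤ (n:ℝ)^2 * r := by positivity
            nlinarith
          calc |θ' j i * m' j - θ'' j i * m'' j|
              = |(θ' j i - θ'' j i) * m' j + θ'' j i * (m' j - m'' j)| := by ring_nf
            _ ≤ |(θ' j i - θ'' j i) * m' j| + |θ'' j i * (m' j - m'' j)| := abs_add_le _ _
            _ = |θ' j i - θ'' j i| * |m' j| + θ'' j i * |m' j - m'' j| := by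
                rw [abs_mul, abs_mul, abs_of_nonneg (hθ''0 j i)]
            _ ≤ (n : ℝ) * r * 1 + θ'' j i * ((i : ℝ) * (n : ℝ) ^ 2 * r) := by
                have h4 := mul_le_mul (hclose j i) h1 (abs_nonneg _) (by positivity)
                have h5 := mul_le_mul_of_nonneg_left h3 (hθ''0 j i)
                linarith
            _ = (n : ℝ) * r + θ'' j i * ((i : ℝ) * (n : ℝ) ^ 2 * r) := by ring
        have hsum2 : ∑ j ∈ Finset.range i, θ'' j i ≤ 1 :=
          le_trans (Finset.sum_le_sum_of_subset_of_nonneg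
            (Finset.range_subset_range.mpr hi.le) (fun j _ _ => hθ''0 j i)) (hθ''sum i)
        calc |∑ j ∈ Finset.range i, θ' j i * m' j - ∑ j ∈ Finset.range i, θ'' j i * m'' j|
            = |∑ j ∈ Finset.range i, (θ' j i * m' j - θ'' j i * m'' j)| := by
              rw [Finset.sum_sub_distrib]
          _ ≤ ∑ j ∈ Finset.range i, |θ' j i * m' j - θ'' j i * m'' j| :=
              Finset.abs_sum_le_sum_abs _ _
          _ ≤ ∑ j ∈ Finset.range i, ((n : ℝ) * r + θ'' j i * ((i : ℝ) * (n : ℝ) ^ 2 * r)) :=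
              Finset.sum_le_sum hterm
          _ = (i : ℝ) * ((n : ℝ) * r)
              + (∑ j ∈ Finset.range i, θ'' j i) * ((i : ℝ) * (n : ℝ) ^ 2 * r) := by
              rw [Finset.sum_add_distrib, Finset.sum_const, Finset.card_range,
                ← Finset.sum_mul]
              ring
          _ ≤ (n : ℝ) ^ 2 * r + 1 * ((i : ℝ) * (n : ℝ) ^ 2 * r) := by
              have hin : (i : ℝ) ≤ (n : ℝ) := by exact_mod_cast hi.le
              have h0i : (0:ℝ) ≤ (i:ℝ) := Nat.cast_nonneg i
              have hX : (0:ℝ) ≤ (i : ℝ) * (n : ℝ) ^ 2 * r := by positivity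
              have h6 := mul_le_mul_of_nonneg_right hsum2 hX
              have hnr : (0:ℝ) ≤ (n:ℝ) * r := by positivity
              nlinarith
          _ = ((i : ℝ) + 1) * (n : ℝ) ^ 2 * r := by ring
  intro i hi
  refine ⟨key i hi, (key i hi).trans ?_⟩
  have hin : (i : ℝ) + 1 ≤ (n : ℝ) := by exact_mod_cast hi
  nlinarith [mul_le_mul_of_nonneg_right (mul_le_mul_of_nonneg_right hin (sq_nonneg (n:ℝ))) hr]
end

section
/- Fix an integer n ≥ 1, a weight matrix θ, a set S ⊆ {0,…,n−1} of intervened nodes, a set K ⊆ {0,…,n−1}² of kept edges, and a real r ≥ 0 such that θ(j,i) ≤ r whenever (j,i) ∉ K. Let θ′ be any weight matrix with θ′(j,i) = 0 whenever (j,i) ∉ K and |θ′(j,i) − θ(j,i)| ≤ n·r for all (j,i) ∈ K. Then for every node i ∈ {0,…,n−1}, |μ[θ,S](i) − μ[θ′,S](i)| ≤ n²·(n+1)·r. -/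
lemma blm_mean_bounds (n : ℕ) (θ : ℕ → ℕ → ℝ)
    (hθ0 : ∀ j i, 0 ≤ θ j i)
    (hθsum : ∀ i, ∑ j ∈ Finset.range n, θ j i ≤ 1)
    (S : Finset ℕ) (m : ℕ → ℝ)
    (hm : ∀ i, m i = if i = 0 ∨ i ∈ S then 1
      else ∑ j ∈ Finset.range i, θ j i * m j) :
    ∀ i < n, 0 ≤ m i ∧ m i ≤ 1 := by
  intro i
  induction i using Nat.strong_induction_on with
  | _ i ih =>
    intro hi
    rw [hm i]
    split
    · norm_num
    · constructor
      · exact Finset.sum_nonneg fun j hj =>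
          mul_nonneg (hθ0 j i) ((ih j (Finset.mem_range.mp hj)
            ((Finset.mem_range.mp hj).trans hi)).1)
      · calc ∑ j ∈ Finset.range i, θ j i * m j
            ≤ ∑ j ∈ Finset.range i, θ j i := by
              apply Finset.sum_le_sum
              intro j hj
              have hj' := Finset.mem_range.mp hj
              have hb := ih j hj' (hj'.trans hi)
              nlinarith [hθ0 j i, hb.1, hb.2]
          _ ≤ ∑ j ∈ Finset.range n, θ j i :=
              Finset.sum_le_sum_of_subset_of_nonneg (Finset.range_subset_range.mpr hi.le)
                (fun j _ _ => hθ0 j i)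
          _ ≤ 1 := hθsum i

/-- Lemma 7 of the paper: the interventional mean of the estimated BLM `M'`
(with estimated edge set `K` and weights within `n·r` of the transformed true
weights, and zero weights outside `K`) differs from that of the true model `M`
(with weight matrix `θ`, whose edges outside `K` have weight at most `r`) by
at most `n²·(n+1)·r`.

Here `m` (resp. `m'`) is the interventional mean vector of the model with
weight matrix `θ` (resp. `θ'`), characterized by the strong recursion
`m i = 1` if `i = 0` or `i ∈ S`, and `m i = ∑_{j<i} θ j i · m j` otherwise. -/
theorem blm_estimated_model_reward_close
    (n : ℕ) (hn : 1 ≤ n)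
    (θ : ℕ → ℕ → ℝ)
    (hθ0 : ∀ j i, 0 ≤ θ j i)
    (hθtri : ∀ j i, ¬ j < i → θ j i = 0)
    (hθsum : ∀ i, ∑ j ∈ Finset.range n, θ j i ≤ 1)
    (S : Finset ℕ) (hS : ∀ s ∈ S, s < n)
    (K : Finset (ℕ × ℕ)) (hK : ∀ e ∈ K, e.1 < n ∧ e.2 < n)
    (r : ℝ) (hr : 0 ≤ r)
    (hsmall : ∀ j i, j < n → i < n → (j, i) ∉ K → θ j i ≤ r)
    (θ' : ℕ → ℕ → ℝ)
    (hθ'0 : ∀ j i, 0 ≤ θ' j i)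
    (hθ'tri : ∀ j i, ¬ j < i → θ' j i = 0)
    (hθ'sum : ∀ i, ∑ j ∈ Finset.range n, θ' j i ≤ 1)
    (hθ'out : ∀ j i, (j, i) ∉ K → θ' j i = 0)
    (hθ'close : ∀ j i, (j, i) ∈ K → |θ' j i - θ j i| ≤ (n : ℝ) * r)
    (m m' : ℕ → ℝ)
    (hm : ∀ i, m i = if i = 0 ∨ i ∈ S then 1
      else ∑ j ∈ Finset.range i, θ j i * m j)
    (hm' : ∀ i, m' i = if i = 0 ∨ i ∈ S then 1
      else ∑ j ∈ Finset.range i, θ' j i * m' j) :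
    ∀ i < n, |m i - m' i| ≤ (n : ℝ) ^ 2 * ((n : ℝ) + 1) * r := by
  have hb' := blm_mean_bounds n θ' hθ'0 hθ'sum S m' hm'
  have hnr : (0:ℝ) ≤ (n:ℝ) * r := by positivity
  have hn1 : (1:ℝ) ≤ (n:ℝ) := by exact_mod_cast hn
  have hdiff : ∀ j i, j < n → i < n → |θ j i - θ' j i| ≤ (n:ℝ) * r := by
    intro j i hj hi
    by_cases h : (j, i) ∈ K
    · have := hθ'close j i h; rwa [abs_sub_comm] at this
    · rw [hθ'out j i h, sub_zero, abs_of_nonneg (hθ0 j i)]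
      calc θ j i ≤ r := hsmall j i hj hi h
        _ ≤ (n:ℝ) * r := by nlinarith
  have key : ∀ i < n, |m i - m' i| ≤ (i:ℝ) * (n:ℝ)^2 * r := by
    intro i
    induction i using Nat.strong_induction_on with
    | _ i ih =>
      intro hi
      rw [hm i, hm' i]
      split
      · simp only [sub_self, abs_zero]
        positivity
      · next hns =>
        have hi1 : 1 ≤ i := Nat.one_le_iff_ne_zero.mpr (fun h => hns (Or.inl h))
        have hi1' : (1:ℝ) ≤ (i:ℝ) := by exact_mod_cast hi1
        have hC : (0:ℝ) ≤ ((i:ℝ) - 1) * (n:ℝ)^2 * r := by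
          apply mul_nonneg (mul_nonneg (by linarith) (by positivity)) hr
        calc |∑ j ∈ Finset.range i, θ j i * m j - ∑ j ∈ Finset.range i, θ' j i * m' j|
            = |(∑ j ∈ Finset.range i, θ j i * (m j - m' j))
                + ∑ j ∈ Finset.range i, (θ j i - θ' j i) * m' j| := by
              rw [← Finset.sum_add_distrib, ← Finset.sum_sub_distrib]
              congr 1
              apply Finset.sum_congr rfl
              intro j _
              ring
          _ ≤ |∑ j ∈ Finset.range i, θ j i * (m j - m' j)|
                + |∑ j ∈ Finset.range i, (θ j i - θ' j i) * m' j| := abs_add_le _ _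
          _ ≤ ((i:ℝ) - 1) * (n:ℝ)^2 * r + (i:ℝ) * ((n:ℝ) * r) := by
              gcongr
              · calc |∑ j ∈ Finset.range i, θ j i * (m j - m' j)|
                    ≤ ∑ j ∈ Finset.range i, |θ j i * (m j - m' j)| :=
                      Finset.abs_sum_le_sum_abs _ _
                  _ ≤ ∑ j ∈ Finset.range i, θ j i * (((i:ℝ) - 1) * (n:ℝ)^2 * r) := by
                      apply Finset.sum_le_sum
                      intro j hj
                      have hji := Finset.mem_range.mp hj
                      rw [abs_mul, abs_of_nonneg (hθ0 j i)]
                      apply mul_le_mul_of_nonneg_left _ (hθ0 j i)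
                      calc |m j - m' j| ≤ (j:ℝ) * (n:ℝ)^2 * r := ih j hji (hji.trans hi)
                        _ ≤ ((i:ℝ) - 1) * (n:ℝ)^2 * r := by
                            have : (j:ℝ) + 1 ≤ (i:ℝ) := by exact_mod_cast hji
                            have h2 : (0:ℝ) ≤ (n:ℝ)^2 * r := by positivity
                            nlinarith
                  _ = (∑ j ∈ Finset.range i, θ j i) * (((i:ℝ) - 1) * (n:ℝ)^2 * r) := by
                      rw [Finset.sum_mul]
                  _ ≤ 1 * (((i:ℝ) - 1) * (n:ℝ)^2 * r) := by
                      apply mul_le_mul_of_nonneg_right _ hC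
                      calc ∑ j ∈ Finset.range i, θ j i
                          ≤ ∑ j ∈ Finset.range n, θ j i :=
                            Finset.sum_le_sum_of_subset_of_nonneg
                              (Finset.range_subset_range.mpr hi.le) (fun j _ _ => hθ0 j i)
                        _ ≤ 1 := hθsum i
                  _ = ((i:ℝ) - 1) * (n:ℝ)^2 * r := one_mul _
              · calc |∑ j ∈ Finset.range i, (θ j i - θ' j i) * m' j|
                    ≤ ∑ j ∈ Finset.range i, |(θ j i - θ' j i) * m' j| :=
                      Finset.abs_sum_le_sum_abs _ _
                  _ ≤ ∑ j ∈ Finset.range i, (n:ℝ) * r := by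
                      apply Finset.sum_le_sum
                      intro j hj
                      have hji := Finset.mem_range.mp hj
                      have hjn := hji.trans hi
                      have hbj := hb' j hjn
                      rw [abs_mul, abs_of_nonneg hbj.1]
                      calc |θ j i - θ' j i| * m' j ≤ |θ j i - θ' j i| * 1 := by
                            apply mul_le_mul_of_nonneg_left hbj.2 (abs_nonneg _)
                        _ = |θ j i - θ' j i| := mul_one _
                        _ ≤ (n:ℝ) * r := hdiff j i hjn hi
                  _ = (i:ℝ) * ((n:ℝ) * r) := by
                      rw [Finset.sum_const, Finset.card_range, nsmul_eq_mul]
          _ ≤ (i:ℝ) * (n:ℝ)^2 * r := by nlinarith [hi.le, (by exact_mod_cast hi.le : (i:ℝ) ≤ (n:ℝ))]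
  intro i hi
  calc |m i - m' i| ≤ (i:ℝ) * (n:ℝ)^2 * r := key i hi
    _ ≤ (n:ℝ)^2 * ((n:ℝ) + 1) * r := by
        have h1 : (i:ℝ) ≤ (n:ℝ) := by exact_mod_cast hi.le
        have h2 : (0:ℝ) ≤ (n:ℝ)^2 * r := by positivity
        nlinarith [mul_le_mul_of_nonneg_right (mul_le_mul_of_nonneg_right h1 (sq_nonneg (n:ℝ))) hr]
end
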